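/- arXiv:1808.02326 — 6 statements merged into one kernel-verified Lean document; each statement's English description precedes it below -/
import Mathlib

section
/- Let d ≥ 3 be an integer and let 0 < a₁ < a₂. Then there exist positive constants C₀ and α, depending only on d, a₁ and a₂, such that for every nonnegative measurable function b on ℝ^d, every t > 0 and all x, y ∈ ℝ^d, one has ∫₀ᵗ ∫_{ℝ^d} G_{a₁}(t−s, x, z) · b(z) · s^{−1/2} · G_{a₂}(s, z, y) dz ds ≤ C₀ · N_t^α(b) · G_{a₁}(t, x, y). -/
open MeasureTheory Real Set
open scoped ENNReal

/-- The Gaussian kernel `G_a(s,x,y) = s^{-d/2} exp(-a |x-y|^2 / (2s))`. -/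
noncomputable def gaussG (d : ℕ) (a s : ℝ) (x y : EuclideanSpace ℝ (Fin d)) : ℝ :=
  s ^ (-(d : ℝ) / 2) * Real.exp (-a * ‖x - y‖ ^ 2 / (2 * s))

/-- The Kato-type quantity `N_t^α(b) = sup_x ∫_0^t ∫ s^{-(d+1)/2} exp(-α|x-y|^2/s) b(y) dy ds`. -/
noncomputable def katoN (d : ℕ) (α t : ℝ) (b : EuclideanSpace ℝ (Fin d) → ℝ) : ℝ≥0∞ :=
  ⨆ x : EuclideanSpace ℝ (Fin d), ∫⁻ s in Set.Ioc (0 : ℝ) t,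
    ∫⁻ y, ENNReal.ofReal (s ^ (-((d : ℝ) + 1) / 2) * Real.exp (-α * ‖x - y‖ ^ 2 / s) * b y)

lemma gaussG_nonneg (d : ℕ) (a s : ℝ) (hs : 0 ≤ s) (x y : EuclideanSpace ℝ (Fin d)) :
    0 ≤ gaussG d a s x y := by
  unfold gaussG; positivity

lemma rpow_half_bound (d : ℕ) (t x e : ℝ) (ht : 0 < t) (hx : t / 2 ≤ x)
    (he : e ≤ 0) (hed : -e ≤ (d : ℝ) + 1) : x ^ e ≤ 2 ^ (d + 1) * t ^ e := by
  have h1 : x ^ e ≤ (t / 2) ^ e :=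
    rpow_le_rpow_of_nonpos (by positivity) hx he
  have h2 : (t / 2) ^ e = t ^ e * 2 ^ (-e) := by
    rw [Real.div_rpow ht.le (by norm_num), Real.rpow_neg (by norm_num), div_eq_mul_inv]
  have h3 : (2 : ℝ) ^ (-e) ≤ 2 ^ (d + 1) := by
    rw [show ((2:ℝ) ^ (d+1) : ℝ) = (2:ℝ) ^ (((d+1 : ℕ)):ℝ) from (Real.rpow_natCast 2 (d+1)).symm]
    exact Real.rpow_le_rpow_of_exponent_le one_le_two (by push_cast; linarith)
  calc x ^ e ≤ t ^ e * 2 ^ (-e) := h2 ▸ h1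
    _ ≤ t ^ e * 2 ^ (d + 1) := by
        have h4 : (0:ℝ) ≤ t ^ e := by positivity
        nlinarith
    _ = 2 ^ (d + 1) * t ^ e := by ring

lemma cs_ineq (A B C u v p q : ℝ) (hA : 0 < A) (hB : 0 < B) (_hC : 0 < C)
    (_hu : 0 ≤ u) (_hv : 0 ≤ v) (hp : 0 < p) (hq : 0 < q)
    (hcond : C * (p * B + q * A) ≤ A * B * (p + q)) :
    C * (u + v) ^ 2 / (p + q) ≤ A * u ^ 2 / p + B * v ^ 2 / q := by
  rw [div_add_div _ _ hp.ne' hq.ne', div_le_div_iff₀ (by positivity) (by positivity)]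
  have h1 : A * B * ((u + v) ^ 2 * (p * q)) ≤ (A * u ^ 2 * q + B * v ^ 2 * p) * (p * B + q * A) := by
    nlinarith [sq_nonneg (A * q * u - B * p * v), mul_pos hp hq, sq_nonneg (u + v)]
  have hD : (0:ℝ) < p * B + q * A := by positivity
  rw [← mul_le_mul_iff_of_pos_right hD]
  nlinarith [mul_le_mul_of_nonneg_right hcond (by positivity : (0:ℝ) ≤ (u + v) ^ 2 * (p * q)),
    mul_le_mul_of_nonneg_right h1 (by positivity : (0:ℝ) ≤ p + q)]

lemma exp_ineq1 (a₁ a₂ α s t u v w : ℝ) (ha₁ : 0 < a₁) (ha₁₂ : a₁ < a₂)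
    (hα : α ≤ (a₂ - a₁)/2) (hs : 0 < s) (hst : s ≤ t/2)
    (hu : 0 ≤ u) (hv : 0 ≤ v) (hw : 0 ≤ w) (hwt : w ≤ u + v) :
    a₁ * w ^ 2 / (2 * t) + α * v ^ 2 / s ≤ a₁ * u ^ 2 / (2 * (t - s)) + a₂ * v ^ 2 / (2 * s) := by
  have hts : 0 < t - s := by linarith
  have ht : 0 < t := by linarith
  have H1 : a₁ * (u + v) ^ 2 / (2 * (t - s) + 2 * s) ≤
      a₁ * u ^ 2 / (2 * (t - s)) + a₁ * v ^ 2 / (2 * s) :=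
    cs_ineq a₁ a₁ a₁ u v _ _ ha₁ ha₁ ha₁ hu hv (by linarith) (by linarith) (by nlinarith)
  have he : 2 * (t - s) + 2 * s = 2 * t := by ring
  rw [he] at H1
  have H2 : a₁ * w ^ 2 / (2 * t) ≤ a₁ * (u + v) ^ 2 / (2 * t) := by gcongr
  have H3 : α * v ^ 2 / s ≤ (a₂ - a₁) * v ^ 2 / (2 * s) := by
    rw [div_le_div_iff₀ hs (by linarith)]
    nlinarith [mul_le_mul_of_nonneg_right hα (by positivity : (0:ℝ) ≤ v ^ 2 * s)]
  have hsplit : a₂ * v ^ 2 / (2 * s) = a₁ * v ^ 2 / (2 * s) + (a₂ - a₁) * v ^ 2 / (2 * s) := by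
    ring
  linarith

lemma exp_ineq2 (a₁ a₂ α s t u v w : ℝ) (ha₁ : 0 < a₁) (ha₁₂ : a₁ < a₂)
    (hα : α ≤ (a₁ - a₁ * a₂ / (2 * a₂ - a₁)) / 2) (hs : t/2 ≤ s) (hst : s < t)
    (ht : 0 < t)
    (hu : 0 ≤ u) (hv : 0 ≤ v) (hw : 0 ≤ w) (hwt : w ≤ u + v) :
    a₁ * w ^ 2 / (2 * t) + α * u ^ 2 / (t - s) ≤
      a₁ * u ^ 2 / (2 * (t - s)) + a₂ * v ^ 2 / (2 * s) := by
  set A := a₁ * a₂ / (2 * a₂ - a₁) with hA_def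
  have h2a : 0 < 2 * a₂ - a₁ := by linarith
  have hA_pos : 0 < A := div_pos (mul_pos ha₁ (ha₁.trans ha₁₂)) h2a
  have hts : 0 < t - s := by linarith
  have hs0 : 0 < s := by linarith
  have H1 : a₁ * (u + v) ^ 2 / (2 * (t - s) + 2 * s) ≤
      A * u ^ 2 / (2 * (t - s)) + a₂ * v ^ 2 / (2 * s) := by
    apply cs_ineq A a₂ a₁ u v _ _ hA_pos (by linarith) ha₁ hu hv (by linarith) (by linarith)
    rw [hA_def, ← sub_nonneg]
    have key : a₁ * a₂ / (2 * a₂ - a₁) * a₂ * (2 * (t - s) + 2 * s) -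
        a₁ * (2 * (t - s) * a₂ + 2 * s * (a₁ * a₂ / (2 * a₂ - a₁))) =
        (2 * a₁ * a₂ / (2 * a₂ - a₁)) * ((a₂ - a₁) * (s - (t - s))) := by
      have hne := h2a.ne'
      have hX : a₁ * a₂ / (2 * a₂ - a₁) * (2 * a₂ - a₁) = a₁ * a₂ := div_mul_cancel₀ _ hne
      linear_combination 2 * (t - s) * hX
    rw [key]
    exact mul_nonneg
      (le_of_lt (div_pos (by have := mul_pos ha₁ (ha₁.trans ha₁₂); linarith) h2a))
      (mul_nonneg (by linarith) (by linarith))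
  have he : 2 * (t - s) + 2 * s = 2 * t := by ring
  rw [he] at H1
  have H2 : a₁ * w ^ 2 / (2 * t) ≤ a₁ * (u + v) ^ 2 / (2 * t) := by gcongr
  have H3 : α * u ^ 2 / (t - s) ≤ (a₁ - A) * u ^ 2 / (2 * (t - s)) := by
    rw [div_le_div_iff₀ hts (by linarith)]
    nlinarith [mul_le_mul_of_nonneg_right hα (by positivity : (0:ℝ) ≤ u ^ 2 * (t - s))]
  have hsplit : a₁ * u ^ 2 / (2 * (t - s)) =
      A * u ^ 2 / (2 * (t - s)) + (a₁ - A) * u ^ 2 / (2 * (t - s)) := by ring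
  linarith

theorem stmt0 (d : ℕ) (hd : 3 ≤ d) (a₁ a₂ : ℝ) (ha₁ : 0 < a₁) (ha₁₂ : a₁ < a₂) :
    ∃ C₀ > (0 : ℝ), ∃ α > (0 : ℝ), ∀ b : EuclideanSpace ℝ (Fin d) → ℝ,
      Measurable b → (∀ z, 0 ≤ b z) → ∀ t > (0 : ℝ), ∀ x y : EuclideanSpace ℝ (Fin d),
        (∫⁻ s in Set.Ioc (0 : ℝ) t, ∫⁻ z,
            ENNReal.ofReal
              (gaussG d a₁ (t - s) x z * b z * s ^ (-(1 : ℝ) / 2) * gaussG d a₂ s z y))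
          ≤ ENNReal.ofReal C₀ * katoN d α t b * ENNReal.ofReal (gaussG d a₁ t x y) := by
  have ha₂ : 0 < a₂ := ha₁.trans ha₁₂
  have h2a : 0 < 2 * a₂ - a₁ := by linarith
  have hA_lt : a₁ * a₂ / (2 * a₂ - a₁) < a₁ := by
    rw [div_lt_iff₀ h2a]; nlinarith
  have hdpos : (0:ℝ) < d := by
    have : (3:ℝ) ≤ (d:ℝ) := by exact_mod_cast hd
    linarith
  have hd2 : (-(d:ℝ)/2) ≠ 0 := by
    intro h
    have : (d:ℝ) = 0 := by linarith [(div_eq_zero_iff.mp h)]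
    linarith
  refine ⟨2 ^ (d + 2), by positivity,
    min ((a₂ - a₁)/2) ((a₁ - a₁ * a₂ / (2 * a₂ - a₁))/2),
    lt_min (by linarith) (by linarith), ?_⟩
  set α := min ((a₂ - a₁)/2) ((a₁ - a₁ * a₂ / (2 * a₂ - a₁))/2) with hα_def
  have hα1 : α ≤ (a₂ - a₁)/2 := min_le_left _ _
  have hα2 : α ≤ (a₁ - a₁ * a₂ / (2 * a₂ - a₁))/2 := min_le_right _ _
  intro b hb hb0 t ht x y
  have hG : 0 ≤ gaussG d a₁ t x y := gaussG_nonneg _ _ _ ht.le _ _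
  have hKnn : (0:ℝ) ≤ 2 ^ (d+1) * gaussG d a₁ t x y := by positivity
  -- pointwise bound on the first half
  have ptw1 : ∀ s ∈ Ioc (0:ℝ) (t/2), ∀ z : EuclideanSpace ℝ (Fin d),
      gaussG d a₁ (t - s) x z * b z * s ^ (-(1:ℝ)/2) * gaussG d a₂ s z y ≤
      (2 ^ (d+1) * gaussG d a₁ t x y) *
        (s ^ (-((d:ℝ) + 1)/2) * Real.exp (-α * ‖y - z‖ ^ 2 / s) * b z) := by
    rintro s ⟨hs0, hs2⟩ z
    have hts : 0 < t - s := by linarith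
    have hss : s ^ (-(1:ℝ)/2) * s ^ (-(d:ℝ)/2) = s ^ (-((d:ℝ) + 1)/2) := by
      rw [← Real.rpow_add hs0]; congr 1; ring
    have hpref : (t - s) ^ (-(d:ℝ)/2) * (s ^ (-(1:ℝ)/2) * s ^ (-(d:ℝ)/2)) ≤
        (2 ^ (d+1) * t ^ (-(d:ℝ)/2)) * s ^ (-((d:ℝ) + 1)/2) := by
      rw [hss]
      apply mul_le_mul_of_nonneg_right _ (Real.rpow_nonneg hs0.le _)
      exact rpow_half_bound d t (t - s) _ ht (by linarith)
        (by rw [neg_div]; simp [div_nonneg hdpos.le]) (by rw [neg_div, neg_neg]; linarith)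
    have hexp : Real.exp (-a₁ * ‖x - z‖ ^ 2 / (2 * (t - s))) *
          Real.exp (-a₂ * ‖z - y‖ ^ 2 / (2 * s)) ≤
        Real.exp (-a₁ * ‖x - y‖ ^ 2 / (2 * t)) * Real.exp (-α * ‖y - z‖ ^ 2 / s) := by
      rw [← Real.exp_add, ← Real.exp_add, Real.exp_le_exp]
      have htri : ‖x - y‖ ≤ ‖x - z‖ + ‖z - y‖ := norm_sub_le_norm_sub_add_norm_sub _ _ _
      have hyz : ‖y - z‖ = ‖z - y‖ := norm_sub_rev _ _
      rw [hyz]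
      have := exp_ineq1 a₁ a₂ α s t ‖x - z‖ ‖z - y‖ ‖x - y‖ ha₁ ha₁₂ hα1 hs0 hs2
        (norm_nonneg _) (norm_nonneg _) (norm_nonneg _) htri
      have e1 : -a₁ * ‖x - z‖ ^ 2 / (2 * (t - s)) = -(a₁ * ‖x - z‖ ^ 2 / (2 * (t - s))) := by ring
      have e2 : -a₂ * ‖z - y‖ ^ 2 / (2 * s) = -(a₂ * ‖z - y‖ ^ 2 / (2 * s)) := by ring
      have e3 : -a₁ * ‖x - y‖ ^ 2 / (2 * t) = -(a₁ * ‖x - y‖ ^ 2 / (2 * t)) := by ring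
      have e4 : -α * ‖z - y‖ ^ 2 / s = -(α * ‖z - y‖ ^ 2 / s) := by ring
      rw [e1, e2, e3, e4]
      linarith
    calc gaussG d a₁ (t - s) x z * b z * s ^ (-(1:ℝ)/2) * gaussG d a₂ s z y
        = ((t - s) ^ (-(d:ℝ)/2) * (s ^ (-(1:ℝ)/2) * s ^ (-(d:ℝ)/2))) *
          (Real.exp (-a₁ * ‖x - z‖ ^ 2 / (2 * (t - s))) *
            Real.exp (-a₂ * ‖z - y‖ ^ 2 / (2 * s))) * b z := by
          simp only [gaussG]; ring
      _ ≤ (((2:ℝ) ^ (d+1) * t ^ (-(d:ℝ)/2)) * s ^ (-((d:ℝ) + 1)/2)) *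
          (Real.exp (-a₁ * ‖x - y‖ ^ 2 / (2 * t)) * Real.exp (-α * ‖y - z‖ ^ 2 / s)) * b z := by
          apply mul_le_mul_of_nonneg_right _ (hb0 z)
          apply mul_le_mul hpref hexp (by positivity) (by positivity)
      _ = (2 ^ (d+1) * gaussG d a₁ t x y) *
          (s ^ (-((d:ℝ) + 1)/2) * Real.exp (-α * ‖y - z‖ ^ 2 / s) * b z) := by
          simp only [gaussG]; ring
  -- pointwise bound on the second half
  have ptw2 : ∀ s ∈ Ioc (t/2) t, ∀ z : EuclideanSpace ℝ (Fin d),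
      gaussG d a₁ (t - s) x z * b z * s ^ (-(1:ℝ)/2) * gaussG d a₂ s z y ≤
      (2 ^ (d+1) * gaussG d a₁ t x y) *
        ((t - s) ^ (-((d:ℝ) + 1)/2) * Real.exp (-α * ‖x - z‖ ^ 2 / (t - s)) * b z) := by
    rintro s ⟨hs1, hs2⟩ z
    have hs0 : 0 < s := by linarith
    rcases eq_or_lt_of_le hs2 with hst | hst
    · -- s = t : left side vanishes
      have hz : gaussG d a₁ (t - s) x z = 0 := by
        rw [hst]
        simp [gaussG, Real.zero_rpow hd2]
      rw [hz]
      have h1 : (0:ℝ) ≤ (t - s) ^ (-((d:ℝ) + 1)/2) := Real.rpow_nonneg (by linarith) _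
      calc (0:ℝ) * b z * s ^ (-(1:ℝ)/2) * gaussG d a₂ s z y = 0 := by ring
        _ ≤ _ := mul_nonneg hKnn
            (mul_nonneg (mul_nonneg h1 (Real.exp_nonneg _)) (hb0 z))
    · have hts : 0 < t - s := by linarith
      have hss : s ^ (-(1:ℝ)/2) * s ^ (-(d:ℝ)/2) = s ^ (-((d:ℝ) + 1)/2) := by
        rw [← Real.rpow_add hs0]; congr 1; ring
      have hsplit2 : (t - s) ^ (-(d:ℝ)/2) =
          (t - s) ^ (-((d:ℝ) + 1)/2) * (t - s) ^ ((1:ℝ)/2) := by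
        rw [← Real.rpow_add hts]; congr 1; ring
      have hS : s ^ (-((d:ℝ) + 1)/2) ≤ 2 ^ (d+1) * t ^ (-((d:ℝ) + 1)/2) :=
        rpow_half_bound d t s _ ht hs1.le
          (by rw [neg_div]; simp [div_nonneg (by linarith : (0:ℝ) ≤ (d:ℝ) + 1)])
          (by rw [neg_div, neg_neg]; linarith)
      have h12 : (t - s) ^ ((1:ℝ)/2) ≤ t ^ ((1:ℝ)/2) :=
        Real.rpow_le_rpow hts.le (by linarith) (by norm_num)
      have htt : t ^ (-((d:ℝ) + 1)/2) * t ^ ((1:ℝ)/2) = t ^ (-(d:ℝ)/2) := by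
        rw [← Real.rpow_add ht]; congr 1; ring
      have hpref : (t - s) ^ (-(d:ℝ)/2) * (s ^ (-(1:ℝ)/2) * s ^ (-(d:ℝ)/2)) ≤
          (2 ^ (d+1) * t ^ (-(d:ℝ)/2)) * (t - s) ^ (-((d:ℝ) + 1)/2) := by
        rw [hss, hsplit2]
        have hnn1 : (0:ℝ) ≤ (t - s) ^ (-((d:ℝ) + 1)/2) := Real.rpow_nonneg hts.le _
        calc (t - s) ^ (-((d:ℝ) + 1)/2) * (t - s) ^ ((1:ℝ)/2) * s ^ (-((d:ℝ) + 1)/2)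
            ≤ (t - s) ^ (-((d:ℝ) + 1)/2) * t ^ ((1:ℝ)/2) *
              (2 ^ (d+1) * t ^ (-((d:ℝ) + 1)/2)) := by
              apply mul_le_mul (mul_le_mul_of_nonneg_left h12 hnn1) hS
                (Real.rpow_nonneg hs0.le _)
                (mul_nonneg hnn1 (Real.rpow_nonneg ht.le _))
          _ = (2 ^ (d+1) * (t ^ (-((d:ℝ) + 1)/2) * t ^ ((1:ℝ)/2))) *
              (t - s) ^ (-((d:ℝ) + 1)/2) := by ring
          _ = (2 ^ (d+1) * t ^ (-(d:ℝ)/2)) * (t - s) ^ (-((d:ℝ) + 1)/2) := by rw [htt]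
      have hexp : Real.exp (-a₁ * ‖x - z‖ ^ 2 / (2 * (t - s))) *
            Real.exp (-a₂ * ‖z - y‖ ^ 2 / (2 * s)) ≤
          Real.exp (-a₁ * ‖x - y‖ ^ 2 / (2 * t)) *
            Real.exp (-α * ‖x - z‖ ^ 2 / (t - s)) := by
        rw [← Real.exp_add, ← Real.exp_add, Real.exp_le_exp]
        have htri : ‖x - y‖ ≤ ‖x - z‖ + ‖z - y‖ := norm_sub_le_norm_sub_add_norm_sub _ _ _
        have := exp_ineq2 a₁ a₂ α s t ‖x - z‖ ‖z - y‖ ‖x - y‖ ha₁ ha₁₂ hα2 hs1.le hst ht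
          (norm_nonneg _) (norm_nonneg _) (norm_nonneg _) htri
        have e1 : -a₁ * ‖x - z‖ ^ 2 / (2 * (t - s)) = -(a₁ * ‖x - z‖ ^ 2 / (2 * (t - s))) := by
          ring
        have e2 : -a₂ * ‖z - y‖ ^ 2 / (2 * s) = -(a₂ * ‖z - y‖ ^ 2 / (2 * s)) := by ring
        have e3 : -a₁ * ‖x - y‖ ^ 2 / (2 * t) = -(a₁ * ‖x - y‖ ^ 2 / (2 * t)) := by ring
        have e4 : -α * ‖x - z‖ ^ 2 / (t - s) = -(α * ‖x - z‖ ^ 2 / (t - s)) := by ring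
        rw [e1, e2, e3, e4]
        linarith
      calc gaussG d a₁ (t - s) x z * b z * s ^ (-(1:ℝ)/2) * gaussG d a₂ s z y
          = ((t - s) ^ (-(d:ℝ)/2) * (s ^ (-(1:ℝ)/2) * s ^ (-(d:ℝ)/2))) *
            (Real.exp (-a₁ * ‖x - z‖ ^ 2 / (2 * (t - s))) *
              Real.exp (-a₂ * ‖z - y‖ ^ 2 / (2 * s))) * b z := by
            simp only [gaussG]; ring
        _ ≤ (((2:ℝ) ^ (d+1) * t ^ (-(d:ℝ)/2)) * (t - s) ^ (-((d:ℝ) + 1)/2)) *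
            (Real.exp (-a₁ * ‖x - y‖ ^ 2 / (2 * t)) *
              Real.exp (-α * ‖x - z‖ ^ 2 / (t - s))) * b z := by
            apply mul_le_mul_of_nonneg_right _ (hb0 z)
            apply mul_le_mul hpref hexp (by positivity) ?_
            have hnn1 : (0:ℝ) ≤ (t - s) ^ (-((d:ℝ) + 1)/2) := Real.rpow_nonneg hts.le _
            positivity
        _ = (2 ^ (d+1) * gaussG d a₁ t x y) *
            ((t - s) ^ (-((d:ℝ) + 1)/2) * Real.exp (-α * ‖x - z‖ ^ 2 / (t - s)) * b z) := by
            simp only [gaussG]; ring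
  -- split the time interval
  have hsplitIoc : Ioc (0:ℝ) t = Ioc 0 (t/2) ∪ Ioc (t/2) t :=
    (Ioc_union_Ioc_eq_Ioc (by linarith) (by linarith)).symm
  rw [hsplitIoc, lintegral_union measurableSet_Ioc (Ioc_disjoint_Ioc_of_le le_rfl)]
  set K := ENNReal.ofReal (2 ^ (d+1) * gaussG d a₁ t x y) with hK
  have hKne : K ≠ ⊤ := hK ▸ ENNReal.ofReal_ne_top
  have hN1 : (∫⁻ s in Ioc (0:ℝ) t, ∫⁻ z, ENNReal.ofReal
      (s ^ (-((d:ℝ) + 1)/2) * Real.exp (-α * ‖y - z‖ ^ 2 / s) * b z)) ≤ katoN d α t b := by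
    unfold katoN
    exact le_iSup (fun x' : EuclideanSpace ℝ (Fin d) => ∫⁻ s in Ioc (0:ℝ) t, ∫⁻ z,
      ENNReal.ofReal (s ^ (-((d:ℝ) + 1)/2) * Real.exp (-α * ‖x' - z‖ ^ 2 / s) * b z)) y
  have hN2 : (∫⁻ s in Ioc (0:ℝ) t, ∫⁻ z, ENNReal.ofReal
      (s ^ (-((d:ℝ) + 1)/2) * Real.exp (-α * ‖x - z‖ ^ 2 / s) * b z)) ≤ katoN d α t b := by
    unfold katoN
    exact le_iSup (fun x' : EuclideanSpace ℝ (Fin d) => ∫⁻ s in Ioc (0:ℝ) t, ∫⁻ z,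
      ENNReal.ofReal (s ^ (-((d:ℝ) + 1)/2) * Real.exp (-α * ‖x' - z‖ ^ 2 / s) * b z)) x
  have part1 : (∫⁻ s in Ioc (0:ℝ) (t/2), ∫⁻ z, ENNReal.ofReal
        (gaussG d a₁ (t - s) x z * b z * s ^ (-(1:ℝ)/2) * gaussG d a₂ s z y)) ≤
      K * katoN d α t b := by
    calc (∫⁻ s in Ioc (0:ℝ) (t/2), ∫⁻ z, ENNReal.ofReal
          (gaussG d a₁ (t - s) x z * b z * s ^ (-(1:ℝ)/2) * gaussG d a₂ s z y))
        ≤ ∫⁻ s in Ioc (0:ℝ) (t/2), K * ∫⁻ z, ENNReal.ofReal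
            (s ^ (-((d:ℝ) + 1)/2) * Real.exp (-α * ‖y - z‖ ^ 2 / s) * b z) := by
          apply setLIntegral_mono' measurableSet_Ioc
          intro s hs
          calc (∫⁻ z, ENNReal.ofReal
                (gaussG d a₁ (t - s) x z * b z * s ^ (-(1:ℝ)/2) * gaussG d a₂ s z y))
              ≤ ∫⁻ z, ENNReal.ofReal ((2 ^ (d+1) * gaussG d a₁ t x y) *
                  (s ^ (-((d:ℝ) + 1)/2) * Real.exp (-α * ‖y - z‖ ^ 2 / s) * b z)) :=
                lintegral_mono fun z => ENNReal.ofReal_le_ofReal (ptw1 s hs z)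
            _ = ∫⁻ z, K * ENNReal.ofReal
                  (s ^ (-((d:ℝ) + 1)/2) * Real.exp (-α * ‖y - z‖ ^ 2 / s) * b z) := by
                simp_rw [ENNReal.ofReal_mul hKnn]; rfl
            _ = K * ∫⁻ z, ENNReal.ofReal
                  (s ^ (-((d:ℝ) + 1)/2) * Real.exp (-α * ‖y - z‖ ^ 2 / s) * b z) :=
                lintegral_const_mul' _ _ hKne
      _ = K * ∫⁻ s in Ioc (0:ℝ) (t/2), ∫⁻ z, ENNReal.ofReal
            (s ^ (-((d:ℝ) + 1)/2) * Real.exp (-α * ‖y - z‖ ^ 2 / s) * b z) :=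
          lintegral_const_mul' _ _ hKne
      _ ≤ K * ∫⁻ s in Ioc (0:ℝ) t, ∫⁻ z, ENNReal.ofReal
            (s ^ (-((d:ℝ) + 1)/2) * Real.exp (-α * ‖y - z‖ ^ 2 / s) * b z) :=
          mul_le_mul_right (lintegral_mono_set (Ioc_subset_Ioc_right (by linarith))) K
      _ ≤ K * katoN d α t b := mul_le_mul_right hN1 K
  have part2 : (∫⁻ s in Ioc (t/2) t, ∫⁻ z, ENNReal.ofReal
        (gaussG d a₁ (t - s) x z * b z * s ^ (-(1:ℝ)/2) * gaussG d a₂ s z y)) ≤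
      K * katoN d α t b := by
    have himg : (fun s : ℝ => t - s) '' Ioc (t/2) t = Ico (0:ℝ) (t/2) := by
      rw [Set.image_const_sub_Ioc, show t - t = (0:ℝ) from by ring,
        show t - t/2 = t/2 from by ring]
    calc (∫⁻ s in Ioc (t/2) t, ∫⁻ z, ENNReal.ofReal
          (gaussG d a₁ (t - s) x z * b z * s ^ (-(1:ℝ)/2) * gaussG d a₂ s z y))
        ≤ ∫⁻ s in Ioc (t/2) t, K * ∫⁻ z, ENNReal.ofReal
            ((t - s) ^ (-((d:ℝ) + 1)/2) * Real.exp (-α * ‖x - z‖ ^ 2 / (t - s)) * b z) := by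
          apply setLIntegral_mono' measurableSet_Ioc
          intro s hs
          calc (∫⁻ z, ENNReal.ofReal
                (gaussG d a₁ (t - s) x z * b z * s ^ (-(1:ℝ)/2) * gaussG d a₂ s z y))
              ≤ ∫⁻ z, ENNReal.ofReal ((2 ^ (d+1) * gaussG d a₁ t x y) *
                  ((t - s) ^ (-((d:ℝ) + 1)/2) * Real.exp (-α * ‖x - z‖ ^ 2 / (t - s)) * b z)) :=
                lintegral_mono fun z => ENNReal.ofReal_le_ofReal (ptw2 s hs z)
            _ = ∫⁻ z, K * ENNReal.ofReal
                  ((t - s) ^ (-((d:ℝ) + 1)/2) * Real.exp (-α * ‖x - z‖ ^ 2 / (t - s)) * b z) := by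
                simp_rw [ENNReal.ofReal_mul hKnn]; rfl
            _ = K * ∫⁻ z, ENNReal.ofReal
                  ((t - s) ^ (-((d:ℝ) + 1)/2) * Real.exp (-α * ‖x - z‖ ^ 2 / (t - s)) * b z) :=
                lintegral_const_mul' _ _ hKne
      _ = K * ∫⁻ s in Ioc (t/2) t, ∫⁻ z, ENNReal.ofReal
            ((t - s) ^ (-((d:ℝ) + 1)/2) * Real.exp (-α * ‖x - z‖ ^ 2 / (t - s)) * b z) :=
          lintegral_const_mul' _ _ hKne
      _ = K * ∫⁻ σ in (fun s : ℝ => t - s) '' Ioc (t/2) t, ∫⁻ z, ENNReal.ofReal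
            (σ ^ (-((d:ℝ) + 1)/2) * Real.exp (-α * ‖x - z‖ ^ 2 / σ) * b z) := by
          congr 1
          exact (Measure.measurePreserving_sub_left volume t).setLIntegral_comp_emb
            (MeasurableEquiv.subLeft t).measurableEmbedding
            (fun σ => ∫⁻ z, ENNReal.ofReal
              (σ ^ (-((d:ℝ) + 1)/2) * Real.exp (-α * ‖x - z‖ ^ 2 / σ) * b z))
            (Ioc (t/2) t)
      _ = K * ∫⁻ σ in Ioc (0:ℝ) (t/2), ∫⁻ z, ENNReal.ofReal
            (σ ^ (-((d:ℝ) + 1)/2) * Real.exp (-α * ‖x - z‖ ^ 2 / σ) * b z) := by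
          rw [himg, Measure.restrict_congr_set Ico_ae_eq_Ioc]
      _ ≤ K * ∫⁻ σ in Ioc (0:ℝ) t, ∫⁻ z, ENNReal.ofReal
            (σ ^ (-((d:ℝ) + 1)/2) * Real.exp (-α * ‖x - z‖ ^ 2 / σ) * b z) :=
          mul_le_mul_right (lintegral_mono_set (Ioc_subset_Ioc_right (by linarith))) K
      _ ≤ K * katoN d α t b := mul_le_mul_right hN2 K
  refine le_trans (add_le_add part1 part2) (le_of_eq ?_)
  have hKeq : K = ENNReal.ofReal ((2:ℝ)^(d+1)) * ENNReal.ofReal (gaussG d a₁ t x y) := by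
    rw [hK, ENNReal.ofReal_mul (by positivity)]
  have h2 : (2:ℝ≥0∞) * ENNReal.ofReal ((2:ℝ)^(d+1)) = ENNReal.ofReal ((2:ℝ)^(d+2)) := by
    rw [show (2:ℝ≥0∞) = ENNReal.ofReal 2 from (ENNReal.ofReal_ofNat 2).symm,
      ← ENNReal.ofReal_mul (by norm_num : (0:ℝ) ≤ 2)]
    congr 1
    ring
  calc K * katoN d α t b + K * katoN d α t b
      = (2 * ENNReal.ofReal ((2:ℝ)^(d+1))) * katoN d α t b *
        ENNReal.ofReal (gaussG d a₁ t x y) := by rw [hKeq]; ring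
    _ = ENNReal.ofReal (2^(d+2)) * katoN d α t b * ENNReal.ofReal (gaussG d a₁ t x y) := by
        rw [h2]
end

section
/- For every real z ≥ 0, the series Φ(z) := ∑_{n=0}^∞ z^n / √(n!) converges and satisfies Φ(z) ≤ (1 + z) · e^{z²}. -/
open Real

lemma fact_le_sqrt_fact (k m : ℕ) (hm : 2*k ≤ m) :
    (k.factorial : ℝ) ≤ Real.sqrt (m.factorial) := by
  rw [Real.le_sqrt (by positivity) (by positivity)]
  have h1 : k.factorial * k.factorial ≤ (k+k).factorial :=
    Nat.le_of_dvd (Nat.factorial_pos _) (Nat.factorial_mul_factorial_dvd_factorial_add k k)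
  have h2 : (k+k).factorial ≤ m.factorial :=
    Nat.factorial_le (by omega)
  calc ((k.factorial:ℝ))^2 = ((k.factorial * k.factorial : ℕ) : ℝ) := by push_cast; ring
  _ ≤ (m.factorial : ℝ) := by exact_mod_cast h1.trans h2

theorem stmt3 (z : ℝ) (hz : 0 ≤ z) :
    Summable (fun n : ℕ => z ^ n / Real.sqrt (n.factorial)) ∧
      ∑' n : ℕ, z ^ n / Real.sqrt (n.factorial) ≤ (1 + z) * Real.exp (z ^ 2) := by
  set f : ℕ → ℝ := fun n => z ^ n / Real.sqrt (n.factorial) with hf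
  have hg : Summable (fun k : ℕ => (z^2)^k / (k.factorial : ℝ)) :=
    Real.summable_pow_div_factorial (z^2)
  have hfnonneg : ∀ n, 0 ≤ f n := fun n => by positivity
  have heven : ∀ k : ℕ, f (2*k) ≤ (z^2)^k / (k.factorial : ℝ) := by
    intro k
    have := fact_le_sqrt_fact k (2*k) le_rfl
    calc f (2*k) = (z^2)^k / Real.sqrt ((2*k).factorial) := by
            rw [hf]; ring_nf
      _ ≤ (z^2)^k / (k.factorial : ℝ) := by
            apply div_le_div_of_nonneg_left (by positivity) (by positivity) this
  have hodd : ∀ k : ℕ, f (2*k+1) ≤ z * ((z^2)^k / (k.factorial : ℝ)) := by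
    intro k
    have := fact_le_sqrt_fact k (2*k+1) (by omega)
    calc f (2*k+1) = z * ((z^2)^k / Real.sqrt ((2*k+1).factorial)) := by
            rw [hf]; ring_nf
      _ ≤ z * ((z^2)^k / (k.factorial : ℝ)) := by
            apply mul_le_mul_of_nonneg_left _ hz
            apply div_le_div_of_nonneg_left (by positivity) (by positivity) this
  have hse : Summable (fun k : ℕ => f (2*k)) :=
    Summable.of_nonneg_of_le (fun k => hfnonneg _) heven hg
  have hso : Summable (fun k : ℕ => f (2*k+1)) :=
    Summable.of_nonneg_of_le (fun k => hfnonneg _) hodd (hg.mul_left z)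
  have hsum : Summable f := (hse.hasSum.even_add_odd hso.hasSum).summable
  refine ⟨hsum, ?_⟩
  have hte : ∑' k : ℕ, f (2*k) ≤ Real.exp (z^2) := by
    have : ∑' k : ℕ, (z^2)^k / (k.factorial : ℝ) = Real.exp (z^2) := by
      rw [Real.exp_eq_exp_ℝ, NormedSpace.exp_eq_tsum_div]
    rw [← this]
    exact Summable.tsum_le_tsum heven hse hg
  have hto : ∑' k : ℕ, f (2*k+1) ≤ z * Real.exp (z^2) := by
    have : ∑' k : ℕ, z * ((z^2)^k / (k.factorial : ℝ)) = z * Real.exp (z^2) := by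
      rw [tsum_mul_left, Real.exp_eq_exp_ℝ, NormedSpace.exp_eq_tsum_div]
    rw [← this]
    exact Summable.tsum_le_tsum hodd hso (hg.mul_left z)
  calc ∑' n, f n = (∑' k : ℕ, f (2*k)) + ∑' k : ℕ, f (2*k+1) :=
        (tsum_even_add_odd hse hso).symm
    _ ≤ Real.exp (z^2) + z * Real.exp (z^2) := add_le_add hte hto
    _ = (1 + z) * Real.exp (z^2) := by ring
end

section
/- Let Y be a nonnegative random variable on a probability space and let c ≥ 0 be such that E[Y^n] ≤ √(n!) · c^n for every integer n ≥ 0. Then for every λ > 0, E[e^{λY}] ≤ (1 + λc) · e^{λ²c²} ≤ 2 · e^{2λ²c²}. -/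
open MeasureTheory Real
open scoped ENNReal

private lemma fact_le_sqrt_fact_s4 (k : ℕ) :
    (k.factorial : ℝ) ≤ Real.sqrt ((2 * k).factorial) := by
  have h := Nat.le_of_dvd ((2 * k).factorial_pos)
    (by simpa [two_mul] using Nat.factorial_mul_factorial_dvd_factorial_add k k)
  have h' : ((k.factorial : ℝ)) ^ 2 ≤ ((2 * k).factorial : ℝ) := by
    push_cast [pow_two]
    exact_mod_cast h
  calc (k.factorial : ℝ) = Real.sqrt (((k.factorial : ℝ)) ^ 2) :=
        (Real.sqrt_sq (by positivity)).symm
    _ ≤ Real.sqrt ((2 * k).factorial) := Real.sqrt_le_sqrt h'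

private lemma key_sum_bound (x : ℝ) (hx : 0 ≤ x) :
    (∑' n : ℕ, ENNReal.ofReal (x ^ n / Real.sqrt (n.factorial)))
      ≤ ENNReal.ofReal ((1 + x) * Real.exp (x ^ 2)) := by
  have hexp : Real.exp (x ^ 2) = ∑' k : ℕ, (x ^ 2) ^ k / (k.factorial : ℝ) := by
    rw [Real.exp_eq_exp_ℝ, NormedSpace.exp_eq_tsum_div]
  have hsum : Summable (fun k : ℕ => (x ^ 2) ^ k / (k.factorial : ℝ)) :=
    Real.summable_pow_div_factorial _
  have hofe : ENNReal.ofReal (Real.exp (x ^ 2))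
      = ∑' k : ℕ, ENNReal.ofReal ((x ^ 2) ^ k / (k.factorial : ℝ)) := by
    rw [hexp, ENNReal.ofReal_tsum_of_nonneg (fun k => by positivity) hsum]
  have hsplit := tsum_even_add_odd (f := fun n : ℕ => ENNReal.ofReal (x ^ n / Real.sqrt (n.factorial)))
    ENNReal.summable ENNReal.summable
  rw [← hsplit]
  have heven : (∑' k : ℕ, ENNReal.ofReal (x ^ (2 * k) / Real.sqrt ((2 * k).factorial)))
      ≤ ENNReal.ofReal (Real.exp (x ^ 2)) := by
    rw [hofe]
    refine ENNReal.tsum_le_tsum fun k => ENNReal.ofReal_le_ofReal ?_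
    have hk : (0 : ℝ) < k.factorial := by positivity
    have h1 := fact_le_sqrt_fact_s4 k
    have : x ^ (2 * k) = (x ^ 2) ^ k := by rw [← pow_mul]
    rw [this]
    gcongr
  have hodd : (∑' k : ℕ, ENNReal.ofReal (x ^ (2 * k + 1) / Real.sqrt ((2 * k + 1).factorial)))
      ≤ ENNReal.ofReal x * ENNReal.ofReal (Real.exp (x ^ 2)) := by
    rw [hofe, ← ENNReal.tsum_mul_left]
    refine ENNReal.tsum_le_tsum fun k => ?_
    rw [← ENNReal.ofReal_mul hx]
    refine ENNReal.ofReal_le_ofReal ?_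
    have hk : (0 : ℝ) < k.factorial := by positivity
    have h1 := fact_le_sqrt_fact_s4 k
    have h2 : Real.sqrt ((2 * k).factorial) ≤ Real.sqrt ((2 * k + 1).factorial) := by
      apply Real.sqrt_le_sqrt
      exact_mod_cast Nat.factorial_le (Nat.le_succ _)
    have h3 : (k.factorial : ℝ) ≤ Real.sqrt ((2 * k + 1).factorial) := h1.trans h2
    have hxx : x ^ (2 * k + 1) = x * (x ^ 2) ^ k := by rw [← pow_mul]; ring
    rw [hxx, mul_div_assoc]
    gcongr
  calc (∑' k : ℕ, ENNReal.ofReal (x ^ (2 * k) / Real.sqrt ((2 * k).factorial)))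
        + ∑' k : ℕ, ENNReal.ofReal (x ^ (2 * k + 1) / Real.sqrt ((2 * k + 1).factorial))
      ≤ ENNReal.ofReal (Real.exp (x ^ 2)) + ENNReal.ofReal x * ENNReal.ofReal (Real.exp (x ^ 2)) :=
        add_le_add heven hodd
    _ = ENNReal.ofReal ((1 + x) * Real.exp (x ^ 2)) := by
        rw [← ENNReal.ofReal_mul hx, ← ENNReal.ofReal_add (by positivity) (by positivity)]
        congr 1; ring

theorem stmt4 {Ω : Type*} [MeasurableSpace Ω] (μ : Measure Ω) [IsProbabilityMeasure μ]
    (Y : Ω → ℝ) (hYm : Measurable Y) (hY0 : ∀ ω, 0 ≤ Y ω) (c : ℝ) (hc : 0 ≤ c)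
    (hmom : ∀ n : ℕ,
      (∫⁻ ω, ENNReal.ofReal (Y ω ^ n) ∂μ) ≤ ENNReal.ofReal (Real.sqrt (n.factorial) * c ^ n))
    (l : ℝ) (hl : 0 < l) :
    (∫⁻ ω, ENNReal.ofReal (Real.exp (l * Y ω)) ∂μ)
        ≤ ENNReal.ofReal ((1 + l * c) * Real.exp (l ^ 2 * c ^ 2)) ∧
      ENNReal.ofReal ((1 + l * c) * Real.exp (l ^ 2 * c ^ 2))
        ≤ ENNReal.ofReal (2 * Real.exp (2 * l ^ 2 * c ^ 2)) := by
  have hx : 0 ≤ l * c := by positivity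
  have hxsq : (l * c) ^ 2 = l ^ 2 * c ^ 2 := by ring
  constructor
  · -- expand exp as series
    have hpt : ∀ ω, ENNReal.ofReal (Real.exp (l * Y ω))
        = ∑' n : ℕ, ENNReal.ofReal ((l * Y ω) ^ n / (n.factorial : ℝ)) := by
      intro ω
      rw [show Real.exp (l * Y ω) = ∑' n : ℕ, (l * Y ω) ^ n / (n.factorial : ℝ) by
        rw [Real.exp_eq_exp_ℝ, NormedSpace.exp_eq_tsum_div]]
      exact ENNReal.ofReal_tsum_of_nonneg
        (fun n => by have := hY0 ω; positivity) (Real.summable_pow_div_factorial _)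
    calc (∫⁻ ω, ENNReal.ofReal (Real.exp (l * Y ω)) ∂μ)
        = ∑' n : ℕ, ∫⁻ ω, ENNReal.ofReal ((l * Y ω) ^ n / (n.factorial : ℝ)) ∂μ := by
          simp_rw [hpt]
          exact lintegral_tsum fun n =>
            (((hYm.const_mul l).pow_const n).div_const _).ennreal_ofReal.aemeasurable
      _ ≤ ∑' n : ℕ, ENNReal.ofReal ((l * c) ^ n / Real.sqrt (n.factorial)) := by
          refine ENNReal.tsum_le_tsum fun n => ?_
          have hmeas : Measurable fun ω => ENNReal.ofReal (Y ω ^ n) :=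
            (hYm.pow_const n).ennreal_ofReal
          have hfac : (0 : ℝ) < n.factorial := by positivity
          have hsq : (0 : ℝ) < Real.sqrt n.factorial := Real.sqrt_pos.2 hfac
          have heq : ∀ ω, ENNReal.ofReal ((l * Y ω) ^ n / (n.factorial : ℝ))
              = ENNReal.ofReal (l ^ n / (n.factorial : ℝ)) * ENNReal.ofReal (Y ω ^ n) := by
            intro ω
            rw [← ENNReal.ofReal_mul (by positivity)]
            congr 1
            rw [mul_pow]; ring
          calc (∫⁻ ω, ENNReal.ofReal ((l * Y ω) ^ n / (n.factorial : ℝ)) ∂μ)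
              = ENNReal.ofReal (l ^ n / (n.factorial : ℝ))
                  * ∫⁻ ω, ENNReal.ofReal (Y ω ^ n) ∂μ := by
                simp_rw [heq]
                exact lintegral_const_mul _ hmeas
            _ ≤ ENNReal.ofReal (l ^ n / (n.factorial : ℝ))
                  * ENNReal.ofReal (Real.sqrt (n.factorial) * c ^ n) := by
                gcongr
                exact hmom n
            _ = ENNReal.ofReal ((l * c) ^ n / Real.sqrt (n.factorial)) := by
                rw [← ENNReal.ofReal_mul (by positivity)]
                congr 1
                have hss : Real.sqrt (n.factorial) * Real.sqrt (n.factorial)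
                    = (n.factorial : ℝ) := Real.mul_self_sqrt hfac.le
                rw [mul_pow, ← hss]
                field_simp
                rw [Real.sqrt_sq hsq.le]
      _ ≤ ENNReal.ofReal ((1 + l * c) * Real.exp ((l * c) ^ 2)) := key_sum_bound _ hx
      _ = ENNReal.ofReal ((1 + l * c) * Real.exp (l ^ 2 * c ^ 2)) := by rw [hxsq]
  · apply ENNReal.ofReal_le_ofReal
    have h1 : 1 + l * c ≤ Real.exp (l * c) := by linarith [Real.add_one_le_exp (l * c)]
    have h2 : Real.exp (l * c) ≤ 2 * Real.exp ((l * c) ^ 2) := by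
      rw [show (2 : ℝ) = Real.exp (Real.log 2) by rw [Real.exp_log]; norm_num,
        ← Real.exp_add]
      apply Real.exp_le_exp.2
      nlinarith [Real.log_two_gt_d9, sq_nonneg (l * c - 1/2)]
    have harg : (l * c) ^ 2 + (l * c) ^ 2 = 2 * l ^ 2 * c ^ 2 := by ring
    calc (1 + l * c) * Real.exp (l ^ 2 * c ^ 2)
        = (1 + l * c) * Real.exp ((l * c) ^ 2) := by rw [hxsq]
      _ ≤ Real.exp (l * c) * Real.exp ((l * c) ^ 2) :=
          mul_le_mul_of_nonneg_right h1 (Real.exp_pos _).le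
      _ ≤ (2 * Real.exp ((l * c) ^ 2)) * Real.exp ((l * c) ^ 2) :=
          mul_le_mul_of_nonneg_right h2 (Real.exp_pos _).le
      _ = 2 * Real.exp (2 * l ^ 2 * c ^ 2) := by
          rw [mul_assoc, ← Real.exp_add, harg]
end

section
/- Let d ≥ 1 be an integer, let C₄, C₅, C₆ > 0, and let q : (0,∞) × ℝ^d × ℝ^d → [0,∞) be measurable with q(s,x,y) ≤ C₄ · e^{C₅ s} · s^{−d/2} · exp(−C₆|x−y|²/s) for all s > 0 and x, y ∈ ℝ^d. Let μ be a positive measure on ℝ^d, let φ : ℝ^d → [0,∞) be measurable with ∫_{ℝ^d} φ(x) dx = 1, and set b(x) := ∫_{ℝ^d} φ(x−y) μ(dy). Then for every t ∈ (0,1], Λ_t(b) ≤ C₄ · e^{C₅} · N_t^{C₆}(μ). -/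
open MeasureTheory Real Set
open scoped ENNReal

theorem stmt7 (d : ℕ) (hd : 1 ≤ d) (C₄ C₅ C₆ : ℝ) (h4 : 0 < C₄) (h5 : 0 < C₅) (h6 : 0 < C₆)
    (q : ℝ → EuclideanSpace ℝ (Fin d) → EuclideanSpace ℝ (Fin d) → ℝ)
    (hqm : Measurable fun p : ℝ × EuclideanSpace ℝ (Fin d) × EuclideanSpace ℝ (Fin d) =>
      q p.1 p.2.1 p.2.2)
    (hq0 : ∀ s x y, 0 ≤ q s x y)
    (hqub : ∀ s : ℝ, 0 < s → ∀ x y : EuclideanSpace ℝ (Fin d),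
      q s x y ≤ C₄ * Real.exp (C₅ * s) * s ^ (-(d : ℝ) / 2) * Real.exp (-C₆ * ‖x - y‖ ^ 2 / s))
    (μ : Measure (EuclideanSpace ℝ (Fin d)))
    (φ : EuclideanSpace ℝ (Fin d) → ℝ) (hφm : Measurable φ) (hφ0 : ∀ x, 0 ≤ φ x)
    (hφ1 : (∫⁻ x, ENNReal.ofReal (φ x)) = 1)
    (t : ℝ) (ht : t ∈ Set.Ioc (0 : ℝ) 1) :
    (⨆ x : EuclideanSpace ℝ (Fin d), ∫⁻ s in Set.Ioc (0 : ℝ) t, ∫⁻ y,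
        ENNReal.ofReal (s ^ (-(1 : ℝ) / 2) * q s x y) * ∫⁻ w, ENNReal.ofReal (φ (y - w)) ∂μ)
      ≤ ENNReal.ofReal (C₄ * Real.exp C₅) *
          ⨆ x : EuclideanSpace ℝ (Fin d), ∫⁻ s in Set.Ioc (0 : ℝ) t, ∫⁻ y,
            ENNReal.ofReal (s ^ (-((d : ℝ) + 1) / 2) * Real.exp (-C₆ * ‖x - y‖ ^ 2 / s)) ∂μ := by
  classical
  set c : ℝ≥0∞ := ENNReal.ofReal (C₄ * Real.exp C₅) with hc
  set N : EuclideanSpace ℝ (Fin d) → ℝ≥0∞ := fun x => ∫⁻ s in Set.Ioc (0 : ℝ) t, ∫⁻ y,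
      ENNReal.ofReal (s ^ (-((d : ℝ) + 1) / 2) * Real.exp (-C₆ * ‖x - y‖ ^ 2 / s)) ∂μ with hN
  set K : ℝ≥0∞ := ⨆ x : EuclideanSpace ℝ (Fin d), N x with hK
  have hc0 : c ≠ 0 := by
    simp only [hc, ne_eq, ENNReal.ofReal_eq_zero, not_le]
    positivity
  have hcT : c ≠ ⊤ := ENNReal.ofReal_ne_top
  by_cases hKtop : K = ⊤
  · rw [hKtop, ENNReal.mul_top hc0]
    exact le_top
  -- μ is σ-finite in this case
  haveI hμsf : SigmaFinite μ := by
    have h0 : N 0 < ⊤ := lt_of_le_of_lt (le_iSup N 0) (lt_top_iff_ne_top.2 hKtop)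
    obtain ⟨s₀, hs₀, hfin⟩ : ∃ s₀ ∈ Set.Ioc (0 : ℝ) t, (∫⁻ y,
        ENNReal.ofReal (s₀ ^ (-((d : ℝ) + 1) / 2)
          * Real.exp (-C₆ * ‖(0 : EuclideanSpace ℝ (Fin d)) - y‖ ^ 2 / s₀)) ∂μ) < ⊤ := by
      by_contra h
      push_neg at h
      have hbig : (⊤ : ℝ≥0∞) ≤ N 0 := by
        have h1 : (∫⁻ _s in Set.Ioc (0 : ℝ) t, (⊤ : ℝ≥0∞)) ≤ N 0 :=
          setLIntegral_mono' measurableSet_Ioc fun s hs => h s hs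
        rwa [setLIntegral_const, ENNReal.top_mul (by
          simp [Real.volume_Ioc, ENNReal.ofReal_eq_zero, not_le, ht.1])] at h1
      exact (lt_irrefl _ (hbig.trans_lt h0)).elim
    set g : EuclideanSpace ℝ (Fin d) → ℝ≥0∞ := fun y =>
      ENNReal.ofReal (s₀ ^ (-((d : ℝ) + 1) / 2)
        * Real.exp (-C₆ * ‖(0 : EuclideanSpace ℝ (Fin d)) - y‖ ^ 2 / s₀)) with hg
    have hgm : Measurable g := by
      apply Measurable.ennreal_ofReal
      exact measurable_const.mul
        ((((measurable_const.sub measurable_id).norm.pow measurable_const).const_mul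
          (-C₆)).div measurable_const).exp
    have hfinball : ∀ n : ℕ, μ {y : EuclideanSpace ℝ (Fin d) | ‖y‖ ≤ n} < ⊤ := by
      intro n
      set ε : ℝ≥0∞ := ENNReal.ofReal (s₀ ^ (-((d : ℝ) + 1) / 2)
          * Real.exp (-C₆ * (n : ℝ) ^ 2 / s₀)) with hε
      have hs₀pos : (0 : ℝ) < s₀ := hs₀.1
      have hε0 : ε ≠ 0 := by
        simp only [hε, ne_eq, ENNReal.ofReal_eq_zero, not_le]
        positivity
      have hsub : {y : EuclideanSpace ℝ (Fin d) | ‖y‖ ≤ n}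
          ⊆ {y : EuclideanSpace ℝ (Fin d) | ε ≤ g y} := by
        intro y hy
        simp only [Set.mem_setOf_eq] at hy ⊢
        apply ENNReal.ofReal_le_ofReal
        have h1 : ‖(0 : EuclideanSpace ℝ (Fin d)) - y‖ ^ 2 ≤ (n : ℝ) ^ 2 := by
          rw [zero_sub, norm_neg]
          exact pow_le_pow_left₀ (norm_nonneg _) hy 2
        have h2 : Real.exp (-C₆ * (n : ℝ) ^ 2 / s₀)
            ≤ Real.exp (-C₆ * ‖(0 : EuclideanSpace ℝ (Fin d)) - y‖ ^ 2 / s₀) := by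
          apply Real.exp_le_exp.2
          rw [div_le_div_iff₀ hs₀pos hs₀pos]
          nlinarith [mul_le_mul_of_nonneg_left h1 (mul_pos h6 hs₀pos).le]
        have h3 : (0 : ℝ) ≤ s₀ ^ (-((d : ℝ) + 1) / 2) := Real.rpow_nonneg hs₀pos.le _
        nlinarith [Real.exp_pos (-C₆ * (n : ℝ) ^ 2 / s₀)]
      calc μ {y : EuclideanSpace ℝ (Fin d) | ‖y‖ ≤ n}
          ≤ μ {y : EuclideanSpace ℝ (Fin d) | ε ≤ g y} := measure_mono hsub
        _ ≤ (∫⁻ y, g y ∂μ) / ε := by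
            rw [ENNReal.le_div_iff_mul_le (Or.inl hε0) (Or.inl ENNReal.ofReal_ne_top),
              mul_comm]
            exact mul_meas_ge_le_lintegral₀ hgm.aemeasurable ε
        _ < ⊤ := ENNReal.div_lt_top hfin.ne hε0
    refine ⟨⟨⟨fun n => {y : EuclideanSpace ℝ (Fin d) | ‖y‖ ≤ n}, fun _ => trivial,
      hfinball, ?_⟩⟩⟩
    refine Set.eq_univ_iff_forall.2 fun y => Set.mem_iUnion.2 ?_
    obtain ⟨n, hn⟩ := exists_nat_ge ‖y‖
    exact ⟨n, hn⟩
  -- main estimate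
  refine iSup_le fun x => ?_
  set B : EuclideanSpace ℝ (Fin d) → ℝ≥0∞ := fun y =>
    ∫⁻ w, ENNReal.ofReal (φ (y - w)) ∂μ with hB
  set g : ℝ → EuclideanSpace ℝ (Fin d) → ℝ≥0∞ := fun s y =>
    ENNReal.ofReal (s ^ (-((d : ℝ) + 1) / 2) * Real.exp (-C₆ * ‖x - y‖ ^ 2 / s)) with hg
  -- pointwise bound
  have step1 : ∀ s ∈ Set.Ioc (0 : ℝ) t, ∀ y : EuclideanSpace ℝ (Fin d),
      ENNReal.ofReal (s ^ (-(1 : ℝ) / 2) * q s x y) ≤ c * g s y := by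
    intro s hs y
    rw [hc, hg, ← ENNReal.ofReal_mul (by positivity)]
    apply ENNReal.ofReal_le_ofReal
    have hspos : (0 : ℝ) < s := hs.1
    have hexp : Real.exp (C₅ * s) ≤ Real.exp C₅ := by
      apply Real.exp_le_exp.2
      nlinarith [hs.2, ht.2, hs.1]
    have hpow : s ^ (-(1 : ℝ) / 2) * s ^ (-(d : ℝ) / 2) = s ^ (-((d : ℝ) + 1) / 2) := by
      rw [← Real.rpow_add hspos]
      ring_nf
    calc s ^ (-(1 : ℝ) / 2) * q s x y
        ≤ s ^ (-(1 : ℝ) / 2) * (C₄ * Real.exp (C₅ * s) * s ^ (-(d : ℝ) / 2)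
          * Real.exp (-C₆ * ‖x - y‖ ^ 2 / s)) :=
          mul_le_mul_of_nonneg_left (hqub s hspos x y) (Real.rpow_nonneg hspos.le _)
      _ = C₄ * Real.exp (C₅ * s) * ((s ^ (-(1 : ℝ) / 2) * s ^ (-(d : ℝ) / 2))
          * Real.exp (-C₆ * ‖x - y‖ ^ 2 / s)) := by ring
      _ = C₄ * Real.exp (C₅ * s) * (s ^ (-((d : ℝ) + 1) / 2)
          * Real.exp (-C₆ * ‖x - y‖ ^ 2 / s)) := by rw [hpow]
      _ ≤ C₄ * Real.exp C₅ * (s ^ (-((d : ℝ) + 1) / 2)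
          * Real.exp (-C₆ * ‖x - y‖ ^ 2 / s)) := by
          apply mul_le_mul_of_nonneg_right _ (by positivity)
          exact mul_le_mul_of_nonneg_left hexp h4.le
  -- measurability helpers
  have hgm2 : Measurable fun p : ℝ × EuclideanSpace ℝ (Fin d) => g p.1 p.2 := by
    apply Measurable.ennreal_ofReal
    exact (measurable_fst.pow_const _).mul
      ((((measurable_const.sub measurable_snd).norm.pow measurable_const).const_mul
        (-C₆)).div measurable_fst).exp
  have hgm1 : ∀ s, Measurable (g s) := fun s =>
    hgm2.comp (measurable_const.prodMk measurable_id)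
  -- the per-s rearrangement
  have swap1 : ∀ s : ℝ, (∫⁻ y, g s y * B y) = ∫⁻ z, ENNReal.ofReal (φ z) *
      ∫⁻ w, ENNReal.ofReal ((s : ℝ) ^ (-((d : ℝ) + 1) / 2)
        * Real.exp (-C₆ * ‖(x - z) - w‖ ^ 2 / s)) ∂μ := by
    intro s
    have mphi : Measurable fun p : EuclideanSpace ℝ (Fin d) × EuclideanSpace ℝ (Fin d) =>
        ENNReal.ofReal (φ (p.1 - p.2)) := by
      apply Measurable.ennreal_ofReal
      exact hφm.comp (measurable_fst.sub measurable_snd)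
    have m1 : Measurable fun p : EuclideanSpace ℝ (Fin d) × EuclideanSpace ℝ (Fin d) =>
        g s p.1 * ENNReal.ofReal (φ (p.1 - p.2)) :=
      ((hgm1 s).comp measurable_fst).mul mphi
    have mphi2 : Measurable fun p : EuclideanSpace ℝ (Fin d) × EuclideanSpace ℝ (Fin d) =>
        ENNReal.ofReal (φ p.2) := by
      apply Measurable.ennreal_ofReal
      exact hφm.comp measurable_snd
    have m2 : Measurable fun p : EuclideanSpace ℝ (Fin d) × EuclideanSpace ℝ (Fin d) =>
        g s (p.2 + p.1) * ENNReal.ofReal (φ p.2) :=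
      ((hgm1 s).comp (measurable_snd.add measurable_fst)).mul mphi2
    calc (∫⁻ y, g s y * B y)
        = ∫⁻ y, ∫⁻ w, g s y * ENNReal.ofReal (φ (y - w)) ∂μ :=
          lintegral_congr fun y => (lintegral_const_mul' _ _ ENNReal.ofReal_ne_top).symm
      _ = ∫⁻ w, (∫⁻ y, g s y * ENNReal.ofReal (φ (y - w))) ∂μ :=
          lintegral_lintegral_swap
            (f := fun y w => g s y * ENNReal.ofReal (φ (y - w))) m1.aemeasurable
      _ = ∫⁻ w, (∫⁻ z, g s (z + w) * ENNReal.ofReal (φ z)) ∂μ := by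
          refine lintegral_congr fun w => ?_
          rw [← lintegral_add_right_eq_self
            (fun y => g s y * ENNReal.ofReal (φ (y - w))) w]
          exact lintegral_congr fun z => by rw [add_sub_cancel_right]
      _ = ∫⁻ z, ∫⁻ w, g s (z + w) * ENNReal.ofReal (φ z) ∂μ ∂volume :=
          lintegral_lintegral_swap
            (f := fun w z => g s (z + w) * ENNReal.ofReal (φ z)) m2.aemeasurable
      _ = ∫⁻ z, ENNReal.ofReal (φ z) * ∫⁻ w, ENNReal.ofReal ((s : ℝ) ^ (-((d : ℝ) + 1) / 2)
            * Real.exp (-C₆ * ‖(x - z) - w‖ ^ 2 / s)) ∂μ := by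
          refine lintegral_congr fun z => ?_
          rw [← lintegral_const_mul' _ _ ENNReal.ofReal_ne_top]
          refine lintegral_congr fun w => ?_
          rw [hg]
          simp only [sub_sub]
          rw [mul_comm]
  -- measurability of inner μ-integral as a function of (s, z)
  have hH : Measurable fun p : ℝ × EuclideanSpace ℝ (Fin d) =>
      ∫⁻ w, ENNReal.ofReal (p.1 ^ (-((d : ℝ) + 1) / 2)
        * Real.exp (-C₆ * ‖(x - p.2) - w‖ ^ 2 / p.1)) ∂μ := by
    apply Measurable.lintegral_prod_right'
      (f := fun p : (ℝ × EuclideanSpace ℝ (Fin d)) × EuclideanSpace ℝ (Fin d) =>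
        ENNReal.ofReal (p.1.1 ^ (-((d : ℝ) + 1) / 2)
          * Real.exp (-C₆ * ‖(x - p.1.2) - p.2‖ ^ 2 / p.1.1)))
    apply Measurable.ennreal_ofReal
    exact (measurable_fst.fst.pow_const _).mul
      (((((measurable_const.sub measurable_fst.snd).sub measurable_snd).norm.pow
        measurable_const).const_mul (-C₆)).div measurable_fst.fst).exp
  have step3 : (∫⁻ s in Set.Ioc (0 : ℝ) t, ∫⁻ y, g s y * B y) ≤ K := by
    have mφ1 : Measurable fun p : ℝ × EuclideanSpace ℝ (Fin d) =>
        ENNReal.ofReal (φ p.2) := by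
      apply Measurable.ennreal_ofReal
      exact hφm.comp measurable_snd
    have mφH : Measurable fun p : ℝ × EuclideanSpace ℝ (Fin d) => ENNReal.ofReal (φ p.2) *
        ∫⁻ w, ENNReal.ofReal (p.1 ^ (-((d : ℝ) + 1) / 2)
          * Real.exp (-C₆ * ‖(x - p.2) - w‖ ^ 2 / p.1)) ∂μ :=
      mφ1.mul hH
    calc (∫⁻ s in Set.Ioc (0 : ℝ) t, ∫⁻ y, g s y * B y)
        = ∫⁻ s in Set.Ioc (0 : ℝ) t, ∫⁻ z, ENNReal.ofReal (φ z) *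
            ∫⁻ w, ENNReal.ofReal ((s : ℝ) ^ (-((d : ℝ) + 1) / 2)
              * Real.exp (-C₆ * ‖(x - z) - w‖ ^ 2 / s)) ∂μ :=
          lintegral_congr fun s => swap1 s
      _ = ∫⁻ z, ∫⁻ s in Set.Ioc (0 : ℝ) t, ENNReal.ofReal (φ z) *
            ∫⁻ w, ENNReal.ofReal ((s : ℝ) ^ (-((d : ℝ) + 1) / 2)
              * Real.exp (-C₆ * ‖(x - z) - w‖ ^ 2 / s)) ∂μ :=
          lintegral_lintegral_swap
            (f := fun s z => ENNReal.ofReal (φ z) *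
              ∫⁻ w, ENNReal.ofReal ((s : ℝ) ^ (-((d : ℝ) + 1) / 2)
                * Real.exp (-C₆ * ‖(x - z) - w‖ ^ 2 / s)) ∂μ) mφH.aemeasurable
      _ = ∫⁻ z, ENNReal.ofReal (φ z) * ∫⁻ s in Set.Ioc (0 : ℝ) t,
            ∫⁻ w, ENNReal.ofReal ((s : ℝ) ^ (-((d : ℝ) + 1) / 2)
              * Real.exp (-C₆ * ‖(x - z) - w‖ ^ 2 / s)) ∂μ :=
          lintegral_congr fun z => lintegral_const_mul' _ _ ENNReal.ofReal_ne_top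
      _ ≤ ∫⁻ z, ENNReal.ofReal (φ z) * K := by
          refine lintegral_mono fun z => mul_le_mul_right ?_ _
          exact le_iSup N (x - z)
      _ = K := by rw [lintegral_mul_const' K _ hKtop, hφ1, one_mul]
  calc (∫⁻ s in Set.Ioc (0 : ℝ) t, ∫⁻ y,
        ENNReal.ofReal (s ^ (-(1 : ℝ) / 2) * q s x y) * B y)
      ≤ ∫⁻ s in Set.Ioc (0 : ℝ) t, ∫⁻ y, (c * g s y) * B y := by
        refine setLIntegral_mono' measurableSet_Ioc fun s hs => ?_
        exact lintegral_mono fun y => mul_le_mul_left (step1 s hs y) _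
    _ = ∫⁻ s in Set.Ioc (0 : ℝ) t, c * ∫⁻ y, g s y * B y := by
        refine lintegral_congr fun s => ?_
        rw [← lintegral_const_mul' c _ hcT]
        exact lintegral_congr fun y => mul_assoc _ _ _
    _ = c * ∫⁻ s in Set.Ioc (0 : ℝ) t, ∫⁻ y, g s y * B y :=
        lintegral_const_mul' c _ hcT
    _ ≤ c * K := mul_le_mul_right step3 c
end

section
/- Let d ≥ 3 be an integer and let 0 < δ < 1. Then there exist positive constants C_δ and c_δ, depending only on d and δ, such that for every nonnegative measurable function b on ℝ^d, every t > 0 and all x, y ∈ ℝ^d, one has ∫₀ᵗ ∫_{ℝ^d} G_{1−δ}(t−s, x, z) · b(z) · (|z−y|/s) · G₁(s, z, y) dz ds ≤ C_δ · N_t^{c_δ}(b) · G_{1−δ}(t, x, y). -/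
set_option maxHeartbeats 1000000


open MeasureTheory Real Set
open scoped ENNReal

lemma keyQ {A B C u v w : ℝ} (hA : 0 < A) (hB : 0 < B) (_hC : 0 ≤ C)
    (hw : 0 ≤ w) (htri : w ≤ u + v) (h : C * (A + B) ≤ A * B) :
    C * w ^ 2 ≤ A * u ^ 2 + B * v ^ 2 := by
  have huv : 0 ≤ u + v := le_trans hw htri
  have h1 : w ^ 2 ≤ (u + v) ^ 2 := by nlinarith
  have h2 : C * (A + B) * w ^ 2 ≤ A * B * (u + v) ^ 2 :=
    mul_le_mul h h1 (sq_nonneg w) (mul_pos hA hB).le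
  have h3 : (A + B) * (C * w ^ 2) ≤ (A + B) * (A * u ^ 2 + B * v ^ 2) := by
    nlinarith [sq_nonneg (A * u - B * v)]
  exact le_of_mul_le_mul_left h3 (by positivity)

lemma absorb {δ s v : ℝ} (hδ0 : 0 < δ) (hδ1 : δ < 1) (hs : 0 < s) (hv : 0 ≤ v) :
    v / s * Real.exp (-(δ / 8 * (v ^ 2 / s))) ≤ 8 / δ * s ^ (-(1:ℝ) / 2) := by
  have hsq : 0 < Real.sqrt s := Real.sqrt_pos.mpr hs
  set r : ℝ := v / Real.sqrt s with hr
  have hr0 : 0 ≤ r := div_nonneg hv hsq.le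
  have hq : v ^ 2 / s = r ^ 2 := by
    rw [hr, div_pow, Real.sq_sqrt hs.le]
  have hspow : s ^ (-(1:ℝ) / 2) = (Real.sqrt s)⁻¹ := by
    rw [show (-(1:ℝ)/2) = -(1/2) by norm_num, Real.rpow_neg hs.le, Real.sqrt_eq_rpow]
  have hvs : v / s = r * s ^ (-(1:ℝ) / 2) := by
    rw [hspow, hr, ← div_eq_mul_inv, div_div, Real.mul_self_sqrt hs.le]
  have hcore : r * Real.exp (-(δ / 8 * r ^ 2)) ≤ 8 / δ := by
    have h1 : 1 + δ / 8 * r ^ 2 ≤ Real.exp (δ / 8 * r ^ 2) := by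
      have := Real.add_one_le_exp (δ / 8 * r ^ 2); linarith
    have h2 : Real.exp (-(δ / 8 * r ^ 2)) ≤ (1 + δ / 8 * r ^ 2)⁻¹ := by
      rw [Real.exp_neg]
      exact inv_anti₀ (by positivity) h1
    have h3 : r * Real.exp (-(δ / 8 * r ^ 2)) ≤ r * (1 + δ / 8 * r ^ 2)⁻¹ :=
      mul_le_mul_of_nonneg_left h2 hr0
    have h4 : r * (1 + δ / 8 * r ^ 2)⁻¹ ≤ 8 / δ := by
      rw [inv_eq_one_div, mul_one_div, div_le_div_iff₀ (by positivity) hδ0]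
      nlinarith [mul_nonneg hδ0.le (sq_nonneg (2 * r - 1))]
    linarith
  calc v / s * Real.exp (-(δ / 8 * (v ^ 2 / s)))
      = r * Real.exp (-(δ / 8 * r ^ 2)) * s ^ (-(1:ℝ) / 2) := by
        rw [hq, hvs]; ring
    _ ≤ 8 / δ * s ^ (-(1:ℝ) / 2) :=
        mul_le_mul_of_nonneg_right hcore (Real.rpow_nonneg hs.le _)


lemma ptI (d : ℕ) {δ t s u v w B : ℝ} (hδ0 : 0 < δ) (hδ1 : δ < 1)
    (ht : 0 < t) (hs : 0 < s) (hst : s ≤ (1 - δ/8) * t) (hB : 0 ≤ B)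
    (hu : 0 ≤ u) (hv : 0 ≤ v) (hw : 0 ≤ w) (htri : w ≤ u + v) :
    (t - s) ^ (-(d:ℝ)/2) * Real.exp (-(1-δ) * u ^ 2 / (2 * (t - s))) * B * (v / s) *
      (s ^ (-(d:ℝ)/2) * Real.exp (-1 * v ^ 2 / (2 * s)))
    ≤ ((δ/8) ^ (-(d:ℝ)/2) * (8/δ) * (t ^ (-(d:ℝ)/2) * Real.exp (-(1-δ) * w ^ 2 / (2 * t)))) *
      (s ^ (-((d:ℝ)+1)/2) * Real.exp (-(δ*(1-δ)/8) * v ^ 2 / s) * B) := by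
  have ha : (0:ℝ) < 1 - δ := by linarith
  have hm : (0:ℝ) < 1 - δ/2 := by linarith
  have hts : δ/8 * t ≤ t - s := by nlinarith
  have hτ : 0 < t - s := lt_of_lt_of_le (by positivity) hts
  have hdexp : -(d:ℝ)/2 ≤ 0 := by
    have : (0:ℝ) ≤ (d:ℝ) := Nat.cast_nonneg d
    linarith
  -- key quadratic inequality
  have hCkey : (1-δ)/(2*t) * ((1-δ)/(2*(t-s)) + (1-δ/2)/(2*s)) ≤
      ((1-δ)/(2*(t-s))) * ((1-δ/2)/(2*s)) := by
    rw [div_add_div _ _ (by positivity : (2*(t-s)) ≠ 0) (by positivity : (2*s) ≠ 0),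
      div_mul_div_comm, div_mul_div_comm,
      div_le_div_iff₀ (by positivity) (by positivity)]
    nlinarith [mul_nonneg (mul_nonneg (mul_nonneg (mul_pos hs hs).le hτ.le) hδ0.le) ha.le]
  have hkey : (1-δ)/(2*t) * w ^ 2 ≤ (1-δ)/(2*(t-s)) * u ^ 2 + (1-δ/2)/(2*s) * v ^ 2 :=
    keyQ (div_pos ha (by positivity)) (div_pos hm (by positivity))
      (le_of_lt (div_pos ha (by positivity))) hw htri hCkey
  have hv2 : (0:ℝ) ≤ v^2/s := by positivity
  have hexp : -(1-δ) * u ^ 2 / (2*(t-s)) + -1 * v ^ 2 / (2*s) + δ/8*(v^2/s) ≤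
      -(1-δ) * w ^ 2 / (2*t) + -(δ*(1-δ)/8) * v ^ 2 / s := by
    have hgap : (-(1-δ) * w ^ 2 / (2*t) + -(δ*(1-δ)/8) * v ^ 2 / s) -
        (-(1-δ) * u ^ 2 / (2*(t-s)) + -1 * v ^ 2 / (2*s) + δ/8*(v^2/s)) =
        ((1-δ)/(2*(t-s)) * u ^ 2 + (1-δ/2)/(2*s) * v ^ 2 - (1-δ)/(2*t) * w ^ 2) +
          δ*δ/8*(v^2/s) := by ring
    have hpos : (0:ℝ) ≤ δ*δ/8*(v^2/s) := by positivity
    linarith [hkey, hgap, hpos]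
  have hE : Real.exp (-(1-δ) * u ^ 2 / (2 * (t - s))) * Real.exp (-1 * v ^ 2 / (2 * s))
      = Real.exp (-(δ/8*(v^2/s))) *
        Real.exp (-(1-δ) * u ^ 2 / (2*(t-s)) + -1 * v ^ 2 / (2*s) + δ/8*(v^2/s)) := by
    rw [← Real.exp_add, ← Real.exp_add]; congr 1; ring
  have habs := absorb hδ0 hδ1 hs hv
  have hpre : (t - s) ^ (-(d:ℝ)/2) ≤ (δ/8) ^ (-(d:ℝ)/2) * t ^ (-(d:ℝ)/2) := by
    rw [← Real.mul_rpow (by positivity) ht.le]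
    exact Real.rpow_le_rpow_of_nonpos (by positivity) hts hdexp
  calc (t - s) ^ (-(d:ℝ)/2) * Real.exp (-(1-δ) * u ^ 2 / (2 * (t - s))) * B * (v / s) *
      (s ^ (-(d:ℝ)/2) * Real.exp (-1 * v ^ 2 / (2 * s)))
      = (t - s) ^ (-(d:ℝ)/2) * s ^ (-(d:ℝ)/2) * (v / s) *
        (Real.exp (-(1-δ) * u ^ 2 / (2 * (t - s))) * Real.exp (-1 * v ^ 2 / (2 * s))) * B := by
        ring
    _ = (t - s) ^ (-(d:ℝ)/2) * s ^ (-(d:ℝ)/2) *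
        (v / s * Real.exp (-(δ/8*(v^2/s)))) *
        Real.exp (-(1-δ) * u ^ 2 / (2*(t-s)) + -1 * v ^ 2 / (2*s) + δ/8*(v^2/s)) * B := by
        rw [hE]; ring
    _ ≤ ((δ/8) ^ (-(d:ℝ)/2) * t ^ (-(d:ℝ)/2)) * s ^ (-(d:ℝ)/2) *
        (8/δ * s ^ (-(1:ℝ)/2)) *
        Real.exp (-(1-δ) * w ^ 2 / (2*t) + -(δ*(1-δ)/8) * v ^ 2 / s) * B := by
        have e1 : (0:ℝ) ≤ (t - s) ^ (-(d:ℝ)/2) := Real.rpow_nonneg hτ.le _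
        have e2 : (0:ℝ) ≤ s ^ (-(d:ℝ)/2) := Real.rpow_nonneg hs.le _
        have e3 := Real.exp_le_exp.mpr hexp
        have e4 : (0:ℝ) ≤ v / s * Real.exp (-(δ/8*(v^2/s))) := by positivity
        gcongr
    _ = ((δ/8) ^ (-(d:ℝ)/2) * (8/δ) * (t ^ (-(d:ℝ)/2) * Real.exp (-(1-δ) * w ^ 2 / (2 * t)))) *
        (s ^ (-((d:ℝ)+1)/2) * Real.exp (-(δ*(1-δ)/8) * v ^ 2 / s) * B) := by
        rw [show (-((d:ℝ)+1)/2) = (-(d:ℝ)/2) + (-(1:ℝ)/2) by ring, Real.rpow_add hs,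
          Real.exp_add]
        ring


lemma ptII (d : ℕ) (hd : d ≠ 0) {δ t s u v w B : ℝ} (hδ0 : 0 < δ) (hδ1 : δ < 1)
    (ht : 0 < t) (hst : (1 - δ/8) * t < s) (hs : s ≤ t) (hB : 0 ≤ B)
    (hu : 0 ≤ u) (hv : 0 ≤ v) (hw : 0 ≤ w) (htri : w ≤ u + v) :
    (t - s) ^ (-(d:ℝ)/2) * Real.exp (-(1-δ) * u ^ 2 / (2 * (t - s))) * B * (v / s) *
      (s ^ (-(d:ℝ)/2) * Real.exp (-1 * v ^ 2 / (2 * s)))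
    ≤ ((2:ℝ) ^ ((d:ℝ)/2) * (8/δ) * (t ^ (-(d:ℝ)/2) * Real.exp (-(1-δ) * w ^ 2 / (2 * t)))) *
      ((t - s) ^ (-((d:ℝ)+1)/2) * Real.exp (-(δ*(1-δ)/8) * u ^ 2 / (t - s)) * B) := by
  have ha : (0:ℝ) < 1 - δ := by linarith
  have hm : (0:ℝ) < 1 - δ/2 := by linarith
  have hdR : (0:ℝ) < (d:ℝ) := by
    have : 0 < d := Nat.pos_of_ne_zero hd
    exact_mod_cast this
  have hdexp : -(d:ℝ)/2 ≤ 0 := by linarith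
  rcases eq_or_lt_of_le hs with rfl | hslt
  · -- s = t : both sides vanish
    have h1 : (-(d:ℝ)/2) ≠ 0 := by
      intro h; nlinarith
    have h2 : (-((d:ℝ)+1)/2) ≠ 0 := by
      intro h; nlinarith
    simp only [sub_self, Real.zero_rpow h1, Real.zero_rpow h2, zero_mul, mul_zero]
    positivity
  -- now s < t
  have hτ : 0 < t - s := by linarith
  have hs0 : 0 < s := by nlinarith
  have hτδ : t - s ≤ δ/8 * t := by nlinarith
  have hs2 : t/2 ≤ s := by nlinarith
  have hτs : t - s ≤ s := by nlinarith
  -- quadratic key with A := a/(4(t-s)), B := m/(2s)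
  have hlin : (0:ℝ) ≤ s - t + δ/2 * t := by nlinarith
  have hCkey : (1-δ)/(2*t) * ((1-δ)/(4*(t-s)) + (1-δ/2)/(2*s)) ≤
      ((1-δ)/(4*(t-s))) * ((1-δ/2)/(2*s)) := by
    rw [div_add_div _ _ (by positivity : (4*(t-s)) ≠ 0) (by positivity : (2*s) ≠ 0),
      div_mul_div_comm, div_mul_div_comm,
      div_le_div_iff₀ (by positivity) (by positivity)]
    nlinarith [mul_nonneg (mul_nonneg (mul_nonneg hs0.le hτ.le) ha.le) hlin]
  have hkey : (1-δ)/(2*t) * w ^ 2 ≤ (1-δ)/(4*(t-s)) * u ^ 2 + (1-δ/2)/(2*s) * v ^ 2 :=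
    keyQ (div_pos ha (by positivity)) (div_pos hm (by positivity))
      (le_of_lt (div_pos ha (by positivity))) hw htri hCkey
  have hv2 : (0:ℝ) ≤ v^2/s := by positivity
  have hu2 : (0:ℝ) ≤ u^2/(t-s) := by positivity
  have hexp : -(1-δ) * u ^ 2 / (2*(t-s)) + -1 * v ^ 2 / (2*s) + δ/8*(v^2/s) ≤
      -(1-δ) * w ^ 2 / (2*t) + -(δ*(1-δ)/8) * u ^ 2 / (t-s) := by
    generalize hg : t - s = τ at hkey hu2 ⊢
    have hgap : (-(1-δ) * w ^ 2 / (2*t) + -(δ*(1-δ)/8) * u ^ 2 / τ) -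
        (-(1-δ) * u ^ 2 / (2*τ) + -1 * v ^ 2 / (2*s) + δ/8*(v^2/s)) =
        ((1-δ)/(4*(τ)) * u ^ 2 + (1-δ/2)/(2*s) * v ^ 2 - (1-δ)/(2*t) * w ^ 2) +
          ((1-δ)*(2-δ)/8) * (u^2/(τ)) + (δ/8) * (v^2/s) := by ring
    have hp1 : (0:ℝ) ≤ ((1-δ)*(2-δ)/8) * (u^2/τ) :=
      mul_nonneg (by nlinarith) hu2
    have hp2 : (0:ℝ) ≤ (δ/8) * (v^2/s) := mul_nonneg (by linarith) hv2
    linarith [hkey, hgap, hp1, hp2]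
  have hE : Real.exp (-(1-δ) * u ^ 2 / (2 * (t - s))) * Real.exp (-1 * v ^ 2 / (2 * s))
      = Real.exp (-(δ/8*(v^2/s))) *
        Real.exp (-(1-δ) * u ^ 2 / (2*(t-s)) + -1 * v ^ 2 / (2*s) + δ/8*(v^2/s)) := by
    rw [← Real.exp_add, ← Real.exp_add]; congr 1; ring
  have habs := absorb hδ0 hδ1 hs0 hv
  have hpre : s ^ (-(d:ℝ)/2) ≤ (2:ℝ) ^ ((d:ℝ)/2) * t ^ (-(d:ℝ)/2) := by
    have h1 : s ^ (-(d:ℝ)/2) ≤ (t/2) ^ (-(d:ℝ)/2) :=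
      Real.rpow_le_rpow_of_nonpos (by positivity) hs2 hdexp
    have h2 : (t/2) ^ (-(d:ℝ)/2) = (2:ℝ) ^ ((d:ℝ)/2) * t ^ (-(d:ℝ)/2) := by
      rw [div_eq_mul_inv, Real.mul_rpow ht.le (by positivity),
        Real.inv_rpow (by norm_num : (0:ℝ) ≤ 2), ← Real.rpow_neg (by norm_num : (0:ℝ) ≤ 2)]
      ring_nf
    linarith [h1, h2.le, h2.ge]
  have hhalf : s ^ (-(1:ℝ)/2) ≤ (t - s) ^ (-(1:ℝ)/2) :=
    Real.rpow_le_rpow_of_nonpos hτ hτs (by norm_num)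
  calc (t - s) ^ (-(d:ℝ)/2) * Real.exp (-(1-δ) * u ^ 2 / (2 * (t - s))) * B * (v / s) *
      (s ^ (-(d:ℝ)/2) * Real.exp (-1 * v ^ 2 / (2 * s)))
      = (t - s) ^ (-(d:ℝ)/2) * s ^ (-(d:ℝ)/2) * (v / s) *
        (Real.exp (-(1-δ) * u ^ 2 / (2 * (t - s))) * Real.exp (-1 * v ^ 2 / (2 * s))) * B := by
        ring
    _ = (t - s) ^ (-(d:ℝ)/2) * s ^ (-(d:ℝ)/2) *
        (v / s * Real.exp (-(δ/8*(v^2/s)))) *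
        Real.exp (-(1-δ) * u ^ 2 / (2*(t-s)) + -1 * v ^ 2 / (2*s) + δ/8*(v^2/s)) * B := by
        rw [hE]; ring
    _ ≤ (t - s) ^ (-(d:ℝ)/2) * ((2:ℝ) ^ ((d:ℝ)/2) * t ^ (-(d:ℝ)/2)) *
        (8/δ * s ^ (-(1:ℝ)/2)) *
        Real.exp (-(1-δ) * w ^ 2 / (2*t) + -(δ*(1-δ)/8) * u ^ 2 / (t-s)) * B := by
        have e1 : (0:ℝ) ≤ (t - s) ^ (-(d:ℝ)/2) := Real.rpow_nonneg hτ.le _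
        have e2 : (0:ℝ) ≤ s ^ (-(d:ℝ)/2) := Real.rpow_nonneg hs0.le _
        have e3 := Real.exp_le_exp.mpr hexp
        have e4 : (0:ℝ) ≤ v / s * Real.exp (-(δ/8*(v^2/s))) := by positivity
        gcongr
    _ ≤ (t - s) ^ (-(d:ℝ)/2) * ((2:ℝ) ^ ((d:ℝ)/2) * t ^ (-(d:ℝ)/2)) *
        (8/δ * (t - s) ^ (-(1:ℝ)/2)) *
        Real.exp (-(1-δ) * w ^ 2 / (2*t) + -(δ*(1-δ)/8) * u ^ 2 / (t-s)) * B := by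
        have e5 : (0:ℝ) ≤ (8:ℝ)/δ := by positivity
        gcongr
    _ = ((2:ℝ) ^ ((d:ℝ)/2) * (8/δ) * (t ^ (-(d:ℝ)/2) * Real.exp (-(1-δ) * w ^ 2 / (2 * t)))) *
        ((t - s) ^ (-((d:ℝ)+1)/2) * Real.exp (-(δ*(1-δ)/8) * u ^ 2 / (t - s)) * B) := by
        rw [show (-((d:ℝ)+1)/2) = (-(d:ℝ)/2) + (-(1:ℝ)/2) by ring, Real.rpow_add hτ,
          Real.exp_add]
        ring



theorem stmt9 (d : ℕ) (hd : 3 ≤ d) (δ : ℝ) (hδ : δ ∈ Set.Ioo (0 : ℝ) 1) :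
    ∃ Cδ > (0 : ℝ), ∃ cδ > (0 : ℝ), ∀ b : EuclideanSpace ℝ (Fin d) → ℝ,
      Measurable b → (∀ z, 0 ≤ b z) → ∀ t > (0 : ℝ), ∀ x y : EuclideanSpace ℝ (Fin d),
        (∫⁻ s in Set.Ioc (0 : ℝ) t, ∫⁻ z,
            ENNReal.ofReal
              (gaussG d (1 - δ) (t - s) x z * b z * (‖z - y‖ / s) * gaussG d 1 s z y))
          ≤ ENNReal.ofReal Cδ * katoN d cδ t b * ENNReal.ofReal (gaussG d (1 - δ) t x y) := by
  obtain ⟨hδ0, hδ1⟩ := hδ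
  have hd0 : d ≠ 0 := by omega
  have ha : (0:ℝ) < 1 - δ := by linarith
  have hC1 : (0:ℝ) < (δ/8) ^ (-(d:ℝ)/2) * (8/δ) := by positivity
  have hC2 : (0:ℝ) < (2:ℝ) ^ ((d:ℝ)/2) * (8/δ) := by positivity
  refine ⟨(δ/8) ^ (-(d:ℝ)/2) * (8/δ) + (2:ℝ) ^ ((d:ℝ)/2) * (8/δ), by positivity,
    δ*(1-δ)/8, by positivity, ?_⟩
  intro b hb hbnn t ht x y
  have hGnn : 0 ≤ gaussG d (1-δ) t x y := by
    unfold gaussG; positivity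
  have ht1 : (0:ℝ) < (1 - δ/8) * t := by nlinarith
  have ht1t : (1 - δ/8) * t < t := by nlinarith
  -- inner Kato integrals
  set KY : ℝ → ℝ≥0∞ := fun s => ∫⁻ z, ENNReal.ofReal
    (s ^ (-((d:ℝ)+1)/2) * Real.exp (-(δ*(1-δ)/8) * ‖y - z‖ ^ 2 / s) * b z) with hKYdef
  set KX : ℝ → ℝ≥0∞ := fun r => ∫⁻ z, ENNReal.ofReal
    (r ^ (-((d:ℝ)+1)/2) * Real.exp (-(δ*(1-δ)/8) * ‖x - z‖ ^ 2 / r) * b z) with hKXdef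
  have hKY : ∫⁻ s in Set.Ioc (0:ℝ) t, KY s ≤ katoN d (δ*(1-δ)/8) t b := by
    rw [katoN, hKYdef]
    exact le_iSup (fun c : EuclideanSpace ℝ (Fin d) => ∫⁻ s in Set.Ioc (0:ℝ) t, ∫⁻ z,
      ENNReal.ofReal (s ^ (-((d:ℝ)+1)/2) * Real.exp (-(δ*(1-δ)/8) * ‖c - z‖ ^ 2 / s) * b z)) y
  have hKX : ∫⁻ s in Set.Ioc (0:ℝ) t, KX s ≤ katoN d (δ*(1-δ)/8) t b := by
    rw [katoN, hKXdef]
    exact le_iSup (fun c : EuclideanSpace ℝ (Fin d) => ∫⁻ s in Set.Ioc (0:ℝ) t, ∫⁻ z,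
      ENNReal.ofReal (s ^ (-((d:ℝ)+1)/2) * Real.exp (-(δ*(1-δ)/8) * ‖c - z‖ ^ 2 / s) * b z)) x
  -- split the time interval
  have hsplit : Set.Ioc (0:ℝ) t = Set.Ioc 0 ((1-δ/8)*t) ∪ Set.Ioc ((1-δ/8)*t) t :=
    (Set.Ioc_union_Ioc_eq_Ioc ht1.le ht1t.le).symm
  rw [hsplit, lintegral_union measurableSet_Ioc (Set.Ioc_disjoint_Ioc_of_le le_rfl)]
  -- Part I
  have hI : (∫⁻ s in Set.Ioc (0:ℝ) ((1-δ/8)*t), ∫⁻ z,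
      ENNReal.ofReal
        (gaussG d (1 - δ) (t - s) x z * b z * (‖z - y‖ / s) * gaussG d 1 s z y))
      ≤ ENNReal.ofReal ((δ/8) ^ (-(d:ℝ)/2) * (8/δ) * gaussG d (1-δ) t x y) *
        katoN d (δ*(1-δ)/8) t b := by
    have step1 : (∫⁻ s in Set.Ioc (0:ℝ) ((1-δ/8)*t), ∫⁻ z,
        ENNReal.ofReal
          (gaussG d (1 - δ) (t - s) x z * b z * (‖z - y‖ / s) * gaussG d 1 s z y))
        ≤ ∫⁻ s in Set.Ioc (0:ℝ) ((1-δ/8)*t),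
            ENNReal.ofReal ((δ/8) ^ (-(d:ℝ)/2) * (8/δ) * gaussG d (1-δ) t x y) * KY s := by
      refine setLIntegral_mono' measurableSet_Ioc (fun s hs => ?_)
      rw [hKYdef]
      rw [← lintegral_const_mul' _ _ ENNReal.ofReal_ne_top]
      refine lintegral_mono (fun z => ?_)
      rw [← ENNReal.ofReal_mul (by positivity)]
      refine ENNReal.ofReal_le_ofReal ?_
      have htri : ‖x - y‖ ≤ ‖x - z‖ + ‖z - y‖ := by
        have h := dist_triangle x z y
        simpa [dist_eq_norm] using h
      have h := ptI d hδ0 hδ1 ht hs.1 hs.2 (hbnn z) (norm_nonneg _) (norm_nonneg _)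
        (norm_nonneg _) htri
      rw [norm_sub_rev y z]
      simp only [gaussG]
      calc gaussG d (1 - δ) (t - s) x z * b z * (‖z - y‖ / s) * gaussG d 1 s z y
          = (t - s) ^ (-(d:ℝ)/2) * Real.exp (-(1-δ) * ‖x - z‖ ^ 2 / (2 * (t - s))) * b z *
            (‖z - y‖ / s) *
            (s ^ (-(d:ℝ)/2) * Real.exp (-1 * ‖z - y‖ ^ 2 / (2 * s))) := by
            simp only [gaussG]
        _ ≤ _ := h
    refine le_trans step1 ?_
    rw [lintegral_const_mul' _ _ ENNReal.ofReal_ne_top]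
    refine mul_le_mul_right (le_trans ?_ hKY) _
    exact lintegral_mono_set (Set.Ioc_subset_Ioc_right ht1t.le)
  -- Part II
  have hII : (∫⁻ s in Set.Ioc ((1-δ/8)*t) t, ∫⁻ z,
      ENNReal.ofReal
        (gaussG d (1 - δ) (t - s) x z * b z * (‖z - y‖ / s) * gaussG d 1 s z y))
      ≤ ENNReal.ofReal ((2:ℝ) ^ ((d:ℝ)/2) * (8/δ) * gaussG d (1-δ) t x y) *
        katoN d (δ*(1-δ)/8) t b := by
    have step1 : (∫⁻ s in Set.Ioc ((1-δ/8)*t) t, ∫⁻ z,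
        ENNReal.ofReal
          (gaussG d (1 - δ) (t - s) x z * b z * (‖z - y‖ / s) * gaussG d 1 s z y))
        ≤ ∫⁻ s in Set.Ioc ((1-δ/8)*t) t,
            ENNReal.ofReal ((2:ℝ) ^ ((d:ℝ)/2) * (8/δ) * gaussG d (1-δ) t x y) * KX (t - s) := by
      refine setLIntegral_mono' measurableSet_Ioc (fun s hs => ?_)
      rw [hKXdef]
      rw [← lintegral_const_mul' _ _ ENNReal.ofReal_ne_top]
      refine lintegral_mono (fun z => ?_)
      rw [← ENNReal.ofReal_mul (by positivity)]
      refine ENNReal.ofReal_le_ofReal ?_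
      have htri : ‖x - y‖ ≤ ‖x - z‖ + ‖z - y‖ := by
        have h := dist_triangle x z y
        simpa [dist_eq_norm] using h
      have h := ptII d hd0 hδ0 hδ1 ht hs.1 hs.2 (hbnn z) (norm_nonneg _) (norm_nonneg _)
        (norm_nonneg _) htri
      simp only [gaussG]
      calc gaussG d (1 - δ) (t - s) x z * b z * (‖z - y‖ / s) * gaussG d 1 s z y
          = (t - s) ^ (-(d:ℝ)/2) * Real.exp (-(1-δ) * ‖x - z‖ ^ 2 / (2 * (t - s))) * b z *
            (‖z - y‖ / s) *
            (s ^ (-(d:ℝ)/2) * Real.exp (-1 * ‖z - y‖ ^ 2 / (2 * s))) := by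
            simp only [gaussG]
        _ ≤ _ := h
    refine le_trans step1 ?_
    rw [lintegral_const_mul' _ _ ENNReal.ofReal_ne_top]
    refine mul_le_mul_right ?_ _
    -- change of variables r = t - s
    have hmp : MeasurePreserving (fun s : ℝ => t - s) volume volume :=
      Measure.measurePreserving_sub_left volume t
    have hemb : MeasurableEmbedding (fun s : ℝ => t - s) :=
      (MeasurableEquiv.subLeft t).measurableEmbedding
    have hpre : (fun s : ℝ => t - s) ⁻¹' (Set.Ico 0 (t - (1-δ/8)*t)) =
        Set.Ioc ((1-δ/8)*t) t := by
      ext s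
      simp only [Set.mem_preimage, Set.mem_Ico, Set.mem_Ioc, sub_nonneg,
        sub_lt_sub_iff_left]
      exact and_comm
    have hcv : ∫⁻ s in Set.Ioc ((1-δ/8)*t) t, KX (t - s) =
        ∫⁻ r in Set.Ico 0 (t - (1-δ/8)*t), KX r := by
      rw [← hpre]
      exact hmp.setLIntegral_comp_preimage_emb hemb KX _
    rw [hcv]
    have hIcoIoc : ∫⁻ r in Set.Ico (0:ℝ) (t - (1-δ/8)*t), KX r =
        ∫⁻ r in Set.Ioc (0:ℝ) (t - (1-δ/8)*t), KX r :=
      setLIntegral_congr Ico_ae_eq_Ioc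
    rw [hIcoIoc]
    refine le_trans (lintegral_mono_set (Set.Ioc_subset_Ioc_right (by nlinarith))) hKX
  refine le_trans (add_le_add hI hII) ?_
  rw [ENNReal.ofReal_mul hC1.le, ENNReal.ofReal_mul hC2.le,
    ENNReal.ofReal_add hC1.le hC2.le]
  exact le_of_eq (by ring)
end

section
/- Let d ≥ 1 be an integer and let q : (0,∞) × ℝ^d × ℝ^d → [0,∞) be measurable and satisfy: (i) the Chapman–Kolmogorov equation q(t,x,y) = ∫_{ℝ^d} q(t−s,x,z) q(s,z,y) dz for 0 < s < t; (ii) the lower Gaussian bound q(t,x,y) ≥ C₁ e^{−C₂ t} t^{−d/2} exp(−C₃|x−y|²/t) for all t > 0 and x, y ∈ ℝ^d, with constants C₁, C₂, C₃ > 0; (iii) there is a function K : (0,1] → (0,∞) with K(r) → 0 as r → 0⁺ such that for all x, y ∈ ℝ^d, all 0 < δ < ε and all r ∈ (0,1], ∫_{B(y,ε)} q(r,x,z) dz ≥ (2πr)^{−d/2} ω_d (ε−δ)^d exp(−(|x−y|+ε−δ)²/(2r)) − 2 exp(−δ²/(r·K(r))). Then for every M > 0, liminf_{t → 0⁺} inf_{x,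 y ∈ ℝ^d, |x−y| ≤ M} ( t · log q(t,x,y) + |x−y|²/2 ) ≥ 0; in particular liminf_{t→0⁺} t · log q(t,x,y) ≥ −|x−y|²/2 uniformly in x, y with |x−y| ≤ M. -/
open MeasureTheory Real Set Filter
open scoped ENNReal

lemma aux_tlog (a : ℝ) (ha : 0 < a) :
    Tendsto (fun t : ℝ => t * Real.log (a * t)) (nhdsWithin 0 (Set.Ioi 0)) (nhds 0) := by
  have h1 : Tendsto (fun t : ℝ => t * Real.log t) (nhdsWithin 0 (Set.Ioi 0)) (nhds 0) := by
    have := tendsto_log_mul_rpow_nhdsGT_zero one_pos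
    simpa [mul_comm, Real.rpow_one] using this
  have h2 : Tendsto (fun t : ℝ => t * Real.log a) (nhdsWithin 0 (Set.Ioi 0)) (nhds 0) := by
    have : Continuous fun t : ℝ => t * Real.log a := continuous_id.mul continuous_const
    simpa using (this.tendsto' 0 0 (by simp)).mono_left nhdsWithin_le_nhds
  have h3 := h2.add h1
  rw [add_zero] at h3
  apply h3.congr'
  filter_upwards [eventually_mem_nhdsWithin] with t (ht : t ∈ Set.Ioi 0)
  rw [Real.log_mul (ne_of_gt ha) (ne_of_gt ht)]
  ring

lemma aux_lin (c : ℝ) :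
    Tendsto (fun t : ℝ => t * c) (nhdsWithin 0 (Set.Ioi 0)) (nhds 0) := by
  have : Continuous fun t : ℝ => t * c := continuous_id.mul continuous_const
  simpa using (this.tendsto' 0 0 (by simp)).mono_left nhdsWithin_le_nhds

lemma aux_sq (c : ℝ) :
    Tendsto (fun t : ℝ => c * t ^ 2) (nhdsWithin 0 (Set.Ioi 0)) (nhds 0) := by
  have : Continuous fun t : ℝ => c * t ^ 2 := continuous_const.mul (continuous_pow 2)
  simpa using (this.tendsto' 0 0 (by simp)).mono_left nhdsWithin_le_nhds

lemma aux_omega (d : ℕ) :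
    0 < (volume (Metric.ball (0 : EuclideanSpace ℝ (Fin d)) 1)).toReal :=
  ENNReal.toReal_pos (Metric.measure_ball_pos volume _ one_pos).ne' measure_ball_lt_top.ne

lemma aux_BA (M ω δ ε' ρ r k : ℝ) (d : ℕ)
    (hω : 0 < ω) (hδ : 0 < δ) (hδε' : δ < ε') (hρ0 : 0 ≤ ρ) (hρM : ρ ≤ M)
    (hr : 0 < r) (h2πr : 2 * Real.pi * r ≤ 1) (hk : 0 < k)
    (hkκ : k ≤ δ ^ 2 / ((M + ε') ^ 2 / 2 + 1))
    (hlog4 : Real.log (4 / (ω * (ε' - δ) ^ d)) ≤ 1 / r) :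
    2 * Real.exp (-δ ^ 2 / (r * k)) ≤
      ((2 * Real.pi * r) ^ (-(d : ℝ) / 2) * ω * (ε' - δ) ^ d *
        Real.exp (-(ρ + ε' - δ) ^ 2 / (2 * r))) / 2 := by
  have hδ' : 0 < ε' - δ := by linarith
  have hc₂ : 0 < ω * (ε' - δ) ^ d := mul_pos hω (pow_pos hδ' d)
  have hM0 : 0 < (M + ε') ^ 2 / 2 + 1 := by positivity
  have e1 : (M + ε') ^ 2 / 2 + 1 ≤ δ ^ 2 / k := by
    rw [le_div_iff₀ hk]
    calc ((M + ε') ^ 2 / 2 + 1) * k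
        ≤ ((M + ε') ^ 2 / 2 + 1) * (δ ^ 2 / ((M + ε') ^ 2 / 2 + 1)) :=
          mul_le_mul_of_nonneg_left hkκ hM0.le
      _ = δ ^ 2 := by field_simp
  have e2 : (ρ + ε' - δ) ^ 2 ≤ (M + ε') ^ 2 := by
    nlinarith [mul_nonneg (by linarith : (0:ℝ) ≤ M + ε' - (ρ + ε' - δ))
      (by linarith : (0:ℝ) ≤ M + ε' + (ρ + ε' - δ))]
  have e3 : 1 / r + (ρ + ε' - δ) ^ 2 / (2 * r) ≤ δ ^ 2 / (r * k) := by
    have h1 : δ ^ 2 / (r * k) = (δ ^ 2 / k) / r := by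
      rw [mul_comm r k, ← div_div]
    have h2 : 1 / r + (ρ + ε' - δ) ^ 2 / (2 * r) = (1 + (ρ + ε' - δ) ^ 2 / 2) / r := by
      field_simp
    rw [h1, h2]
    exact (div_le_div_iff_of_pos_right hr).mpr (by linarith)
  have e4 : Real.exp (-δ ^ 2 / (r * k)) ≤
      Real.exp (-1 / r) * Real.exp (-(ρ + ε' - δ) ^ 2 / (2 * r)) := by
    rw [← Real.exp_add]
    apply Real.exp_le_exp.mpr
    rw [neg_div, neg_div, neg_div]
    linarith
  have e5 : Real.exp (-1 / r) ≤ (ω * (ε' - δ) ^ d) / 4 := by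
    have h4 : (0:ℝ) < 4 / (ω * (ε' - δ) ^ d) := by positivity
    calc Real.exp (-1 / r) ≤ Real.exp (-Real.log (4 / (ω * (ε' - δ) ^ d))) := by
          apply Real.exp_le_exp.mpr
          rw [neg_div]
          exact neg_le_neg hlog4
      _ = (ω * (ε' - δ) ^ d) / 4 := by
          rw [Real.exp_neg, Real.exp_log h4, inv_div]
  have e6 : (1:ℝ) ≤ (2 * Real.pi * r) ^ (-(d : ℝ) / 2) := by
    apply Real.one_le_rpow_of_pos_of_le_one_of_nonpos (by positivity) h2πr
    have : (0:ℝ) ≤ (d : ℝ) / 2 := by positivity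
    linarith
  have hE0 : 0 < Real.exp (-(ρ + ε' - δ) ^ 2 / (2 * r)) := Real.exp_pos _
  have step1 : 2 * Real.exp (-δ ^ 2 / (r * k)) ≤
      2 * (Real.exp (-1 / r) * Real.exp (-(ρ + ε' - δ) ^ 2 / (2 * r))) :=
    mul_le_mul_of_nonneg_left e4 (by norm_num)
  have step2 : Real.exp (-1 / r) * Real.exp (-(ρ + ε' - δ) ^ 2 / (2 * r)) ≤
      (ω * (ε' - δ) ^ d) / 4 * Real.exp (-(ρ + ε' - δ) ^ 2 / (2 * r)) :=
    mul_le_mul_of_nonneg_right e5 hE0.le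
  have step3 : 1 * (ω * (ε' - δ) ^ d) * Real.exp (-(ρ + ε' - δ) ^ 2 / (2 * r)) ≤
      (2 * Real.pi * r) ^ (-(d : ℝ) / 2) * (ω * (ε' - δ) ^ d) *
        Real.exp (-(ρ + ε' - δ) ^ 2 / (2 * r)) :=
    mul_le_mul_of_nonneg_right (mul_le_mul_of_nonneg_right e6 hc₂.le) hE0.le
  linarith [step1, mul_le_mul_of_nonneg_left step2 (by norm_num : (0:ℝ) ≤ 2), step3]

lemma aux_expand (C₁ C₂ C₃ ω δ ε' η θ ρ t : ℝ) (d : ℕ)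
    (hC₁ : 0 < C₁) (hω : 0 < ω) (hδε' : δ < ε') (hη : 0 < η) (hθ : 0 < θ) (ht : 0 < t) :
    t * Real.log ((C₁ * Real.exp (-C₂ * (η * t)) * (η * t) ^ (-(d : ℝ) / 2) *
        Real.exp (-C₃ * ε' ^ 2 / (η * t))) *
      (((2 * Real.pi * (θ * t)) ^ (-(d : ℝ) / 2) * ω * (ε' - δ) ^ d *
        Real.exp (-(ρ + ε' - δ) ^ 2 / (2 * (θ * t)))) / 2))
    = t * (Real.log C₁ + Real.log ω + (d : ℝ) * Real.log (ε' - δ) - Real.log 2)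
      - C₂ * η * t ^ 2 - (d : ℝ) / 2 * (t * Real.log (η * t))
      - (d : ℝ) / 2 * (t * Real.log (2 * Real.pi * θ * t))
      - C₃ * ε' ^ 2 / η - (ρ + ε' - δ) ^ 2 / (2 * θ) := by
  have hηt : 0 < η * t := mul_pos hη ht
  have hθt : 0 < θ * t := mul_pos hθ ht
  have hδ' : 0 < ε' - δ := by linarith
  have hbase : 0 < 2 * Real.pi * (θ * t) := mul_pos (by positivity) hθt
  have hm0 : 0 < C₁ * Real.exp (-C₂ * (η * t)) * (η * t) ^ (-(d : ℝ) / 2) *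
      Real.exp (-C₃ * ε' ^ 2 / (η * t)) :=
    mul_pos (mul_pos (mul_pos hC₁ (Real.exp_pos _)) (Real.rpow_pos_of_pos hηt _))
      (Real.exp_pos _)
  have hA0 : 0 < (2 * Real.pi * (θ * t)) ^ (-(d : ℝ) / 2) * ω * (ε' - δ) ^ d *
      Real.exp (-(ρ + ε' - δ) ^ 2 / (2 * (θ * t))) :=
    mul_pos (mul_pos (mul_pos (Real.rpow_pos_of_pos hbase _) hω) (pow_pos hδ' d))
      (Real.exp_pos _)
  have hlm : Real.log (C₁ * Real.exp (-C₂ * (η * t)) * (η * t) ^ (-(d : ℝ) / 2) *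
      Real.exp (-C₃ * ε' ^ 2 / (η * t)))
      = Real.log C₁ + (-C₂ * (η * t)) + (-(d : ℝ) / 2) * Real.log (η * t) +
        (-C₃ * ε' ^ 2 / (η * t)) := by
    rw [Real.log_mul (by positivity) (Real.exp_ne_zero _),
      Real.log_mul (by positivity) (ne_of_gt (Real.rpow_pos_of_pos hηt _)),
      Real.log_mul (ne_of_gt hC₁) (Real.exp_ne_zero _),
      Real.log_exp, Real.log_exp, Real.log_rpow hηt]
  have hlA : Real.log ((2 * Real.pi * (θ * t)) ^ (-(d : ℝ) / 2) * ω * (ε' - δ) ^ d *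
      Real.exp (-(ρ + ε' - δ) ^ 2 / (2 * (θ * t))))
      = (-(d : ℝ) / 2) * Real.log (2 * Real.pi * (θ * t)) + Real.log ω +
        (d : ℝ) * Real.log (ε' - δ) + (-(ρ + ε' - δ) ^ 2 / (2 * (θ * t))) := by
    rw [Real.log_mul (by positivity) (Real.exp_ne_zero _),
      Real.log_mul (by positivity) (ne_of_gt (pow_pos hδ' d)),
      Real.log_mul (ne_of_gt (Real.rpow_pos_of_pos hbase _)) (ne_of_gt hω),
      Real.log_exp, Real.log_rpow hbase, Real.log_pow]
  rw [Real.log_mul hm0.ne' (div_pos hA0 two_pos).ne', Real.log_div hA0.ne' two_ne_zero,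
    hlm, hlA, show 2 * Real.pi * (θ * t) = 2 * Real.pi * θ * t by ring]
  field_simp
  ring

set_option maxHeartbeats 1600000 in
theorem stmt17 (d : ℕ) (hd : 1 ≤ d)
    (q : ℝ → EuclideanSpace ℝ (Fin d) → EuclideanSpace ℝ (Fin d) → ℝ)
    (hqm : Measurable fun p : ℝ × EuclideanSpace ℝ (Fin d) × EuclideanSpace ℝ (Fin d) =>
      q p.1 p.2.1 p.2.2)
    (hq0 : ∀ s x y, 0 ≤ q s x y)
    (hCK : ∀ s t : ℝ, 0 < s → s < t → ∀ x y : EuclideanSpace ℝ (Fin d),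
      ENNReal.ofReal (q t x y) = ∫⁻ z, ENNReal.ofReal (q (t - s) x z * q s z y))
    (C₁ C₂ C₃ : ℝ) (h1 : 0 < C₁) (h2 : 0 < C₂) (h3 : 0 < C₃)
    (hlb : ∀ t : ℝ, 0 < t → ∀ x y : EuclideanSpace ℝ (Fin d),
      C₁ * Real.exp (-C₂ * t) * t ^ (-(d : ℝ) / 2) * Real.exp (-C₃ * ‖x - y‖ ^ 2 / t)
        ≤ q t x y)
    (K : ℝ → ℝ) (hKpos : ∀ r ∈ Set.Ioc (0 : ℝ) 1, 0 < K r)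
    (hKlim : Filter.Tendsto K (nhdsWithin 0 (Set.Ioi 0)) (nhds 0))
    (hball : ∀ x y : EuclideanSpace ℝ (Fin d), ∀ δ ε' : ℝ, 0 < δ → δ < ε' →
      ∀ r ∈ Set.Ioc (0 : ℝ) 1,
        ENNReal.ofReal
            ((2 * Real.pi * r) ^ (-(d : ℝ) / 2) *
                (volume (Metric.ball (0 : EuclideanSpace ℝ (Fin d)) 1)).toReal *
                (ε' - δ) ^ d * Real.exp (-(‖x - y‖ + ε' - δ) ^ 2 / (2 * r)) -
              2 * Real.exp (-δ ^ 2 / (r * K r)))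
          ≤ ∫⁻ z in Metric.ball y ε', ENNReal.ofReal (q r x z))
    (M : ℝ) (hM : 0 < M) :
    ∀ ε > (0 : ℝ), ∀ᶠ t in nhdsWithin (0 : ℝ) (Set.Ioi 0),
      ∀ x y : EuclideanSpace ℝ (Fin d), ‖x - y‖ ≤ M →
        -ε ≤ t * Real.log (q t x y) + ‖x - y‖ ^ 2 / 2 := by
  intro ε hε
  set ω := (volume (Metric.ball (0 : EuclideanSpace ℝ (Fin d)) 1)).toReal with hωdef
  have hωpos : 0 < ω := aux_omega d
  -- choose parameters
  set η : ℝ := min (1/2) (ε / (4 * M ^ 2 + 4)) with hηdef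
  have hη0 : 0 < η := lt_min (by norm_num) (by positivity)
  have hη2 : η ≤ 1/2 := min_le_left _ _
  have hηM : M ^ 2 * η ≤ ε / 4 := by
    have h := min_le_right (1/2 : ℝ) (ε / (4 * M ^ 2 + 4))
    have h4 : (0:ℝ) < 4 * M ^ 2 + 4 := by positivity
    have h5 : M ^ 2 * η ≤ M ^ 2 * (ε / (4 * M ^ 2 + 4)) :=
      mul_le_mul_of_nonneg_left h (sq_nonneg M)
    have h6 : M ^ 2 * (ε / (4 * M ^ 2 + 4)) ≤ ε / 4 := by
      rw [mul_div_assoc', div_le_div_iff₀ h4 (by norm_num : (0:ℝ) < 4)]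
      linarith [hε.le]
    linarith
  set θ : ℝ := 1 - η with hθdef
  have hθ1 : θ ≤ 1 := by rw [hθdef]; linarith
  have hθhalf : 1/2 ≤ θ := by rw [hθdef]; linarith
  have hθ0 : 0 < θ := by linarith
  set ε' : ℝ := min 1 (min (ε / (8 * (M + 1))) (Real.sqrt (ε * η / (4 * C₃)))) with hε'def
  have hsq : (0:ℝ) < ε * η / (4 * C₃) := by positivity
  have hε'0 : 0 < ε' := lt_min one_pos (lt_min (by positivity) (Real.sqrt_pos.mpr hsq))
  have hε'1 : ε' ≤ 1 := min_le_left _ _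
  have hε'a : ε' ≤ ε / (8 * (M + 1)) := min_le_of_right_le (min_le_left _ _)
  have hε'b : ε' ^ 2 ≤ ε * η / (4 * C₃) := by
    have h : ε' ≤ Real.sqrt (ε * η / (4 * C₃)) := min_le_of_right_le (min_le_right _ _)
    calc ε' ^ 2 ≤ Real.sqrt (ε * η / (4 * C₃)) ^ 2 := by
          exact pow_le_pow_left₀ hε'0.le h 2
      _ = ε * η / (4 * C₃) := Real.sq_sqrt hsq.le
  have hterm2 : 2 * M * ε' + ε' ^ 2 ≤ ε / 4 := by
    have h8 : ε' * (8 * (M + 1)) ≤ ε := (le_div_iff₀ (by positivity)).mp hε'a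
    nlinarith [hε'1, hε'0.le, hM.le]
  have hterm3 : C₃ * ε' ^ 2 / η ≤ ε / 4 := by
    rw [div_le_iff₀ hη0]
    calc C₃ * ε' ^ 2 ≤ C₃ * (ε * η / (4 * C₃)) := mul_le_mul_of_nonneg_left hε'b h3.le
      _ = ε / 4 * η := by field_simp
  set δ : ℝ := ε' / 2 with hδdef
  have hδ0 : 0 < δ := by rw [hδdef]; positivity
  have hδε' : δ < ε' := by rw [hδdef]; linarith
  have hδ' : 0 < ε' - δ := by linarith
  set L : ℝ := max 1 (Real.log (4 / (ω * (ε' - δ) ^ d))) with hLdef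
  have hL1 : (1:ℝ) ≤ L := le_max_left _ _
  have hL0 : 0 < L := lt_of_lt_of_le one_pos hL1
  have hLlog : Real.log (4 / (ω * (ε' - δ) ^ d)) ≤ L := le_max_right _ _
  have hκ0 : 0 < δ ^ 2 / ((M + ε') ^ 2 / 2 + 1) := by positivity
  clear_value ω η θ ε' δ L
  -- eventual facts
  have hΦ : Tendsto (fun t : ℝ =>
      t * (Real.log C₁ + Real.log ω + (d : ℝ) * Real.log (ε' - δ) - Real.log 2)
      - C₂ * η * t ^ 2 - (d : ℝ) / 2 * (t * Real.log (η * t))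
      - (d : ℝ) / 2 * (t * Real.log (2 * Real.pi * θ * t)))
      (nhdsWithin 0 (Set.Ioi 0)) (nhds 0) := by
    have ha := aux_lin (Real.log C₁ + Real.log ω + (d : ℝ) * Real.log (ε' - δ) - Real.log 2)
    have hb := aux_sq (C₂ * η)
    have hc := (aux_tlog η hη0).const_mul ((d : ℝ) / 2)
    have hdd := (aux_tlog (2 * Real.pi * θ) (by positivity)).const_mul ((d : ℝ) / 2)
    have := ((ha.sub hb).sub hc).sub hdd
    simpa using this
  have hΦev := hΦ.eventually_const_lt (show -(ε/4) < (0:ℝ) by linarith)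
  have hmapsto : Tendsto (fun t : ℝ => θ * t) (nhdsWithin 0 (Set.Ioi 0))
      (nhdsWithin 0 (Set.Ioi 0)) := by
    rw [tendsto_nhdsWithin_iff]
    constructor
    · have : Continuous fun t : ℝ => θ * t := continuous_const.mul continuous_id
      exact (this.tendsto' 0 0 (by simp)).mono_left nhdsWithin_le_nhds
    · filter_upwards [eventually_mem_nhdsWithin] with t (ht : t ∈ Set.Ioi 0)
      exact mul_pos hθ0 ht
  have hKev := (hKlim.comp hmapsto).eventually_lt_const hκ0
  have hsmall : ∀ᶠ t in nhdsWithin (0:ℝ) (Set.Ioi 0),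
      t < min 1 (min (1 / (2 * Real.pi)) (1 / L)) := by
    have hpos : 0 < min 1 (min (1 / (2 * Real.pi)) (1 / L)) := by positivity
    filter_upwards [Ioo_mem_nhdsGT hpos] with t ht
    exact ht.2
  filter_upwards [eventually_mem_nhdsWithin, hΦev, hKev, hsmall] with t ht hΦt hKt hts
  intro x y hxy
  have ht0 : 0 < t := ht
  have ht1 : t < 1 := lt_of_lt_of_le hts (min_le_left _ _)
  have ht2π : t < 1 / (2 * Real.pi) :=
    lt_of_lt_of_le hts ((min_le_right _ _).trans (min_le_left _ _))
  have htL : t < 1 / L := lt_of_lt_of_le hts ((min_le_right _ _).trans (min_le_right _ _))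
  have hρ0 : (0:ℝ) ≤ ‖x - y‖ := norm_nonneg _
  have hηt : 0 < η * t := mul_pos hη0 ht0
  have hθt : 0 < θ * t := mul_pos hθ0 ht0
  have hrt : θ * t ≤ t := mul_le_of_le_one_left ht0.le hθ1
  have hIoc : θ * t ∈ Set.Ioc (0:ℝ) 1 := ⟨hθt, le_of_lt (lt_of_le_of_lt hrt ht1)⟩
  have hKt' : K (θ * t) < δ ^ 2 / ((M + ε') ^ 2 / 2 + 1) := hKt
  have hKr0 : 0 < K (θ * t) := hKpos _ hIoc
  -- lower bound for q (η*t) on the ball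
  have hm0 : 0 < C₁ * Real.exp (-C₂ * (η * t)) * (η * t) ^ (-(d : ℝ) / 2) *
      Real.exp (-C₃ * ε' ^ 2 / (η * t)) :=
    mul_pos (mul_pos (mul_pos h1 (Real.exp_pos _)) (Real.rpow_pos_of_pos hηt _))
      (Real.exp_pos _)
  have hql : ∀ z ∈ Metric.ball y ε',
      C₁ * Real.exp (-C₂ * (η * t)) * (η * t) ^ (-(d : ℝ) / 2) *
        Real.exp (-C₃ * ε' ^ 2 / (η * t)) ≤ q (η * t) z y := by
    intro z hz
    have hzy : ‖z - y‖ < ε' := by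
      rw [← dist_eq_norm]
      exact Metric.mem_ball.mp hz
    have hnum : -C₃ * ε' ^ 2 / (η * t) ≤ -C₃ * ‖z - y‖ ^ 2 / (η * t) := by
      apply (div_le_div_iff_of_pos_right hηt).mpr
      have h' : ‖z - y‖ ^ 2 ≤ ε' ^ 2 := pow_le_pow_left₀ (norm_nonneg _) hzy.le 2
      linarith only [mul_le_mul_of_nonneg_left h' h3.le]
    calc C₁ * Real.exp (-C₂ * (η * t)) * (η * t) ^ (-(d : ℝ) / 2) *
          Real.exp (-C₃ * ε' ^ 2 / (η * t))
        ≤ C₁ * Real.exp (-C₂ * (η * t)) * (η * t) ^ (-(d : ℝ) / 2) *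
          Real.exp (-C₃ * ‖z - y‖ ^ 2 / (η * t)) := by
          apply mul_le_mul_of_nonneg_left (Real.exp_le_exp.mpr hnum)
          positivity
      _ ≤ q (η * t) z y := hlb (η * t) hηt z y
  -- the ball integral lower bound and B ≤ A/2
  have hIB := hball x y δ ε' hδ0 hδε' (θ * t) hIoc
  have hlog4 : Real.log (4 / (ω * (ε' - δ) ^ d)) ≤ 1 / (θ * t) := by
    have hr1 : θ * t < 1 / L := lt_of_le_of_lt hrt htL
    have hr2 : θ * t * L < 1 := (lt_div_iff₀ hL0).mp hr1
    have hr3 : L ≤ 1 / (θ * t) := by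
      rw [le_div_iff₀ hθt]
      linarith only [hr2]
    exact le_trans hLlog hr3
  have h2πr : 2 * Real.pi * (θ * t) ≤ 1 := by
    have hp : t * (2 * Real.pi) < 1 := (lt_div_iff₀ (by positivity)).mp ht2π
    have hq' : (0:ℝ) ≤ 2 * Real.pi * t * (1 - θ) :=
      mul_nonneg (mul_nonneg (by positivity) ht0.le) (by linarith only [hθ1])
    linarith only [hp, hq']
  have hBA := aux_BA M ω δ ε' ‖x - y‖ (θ * t) (K (θ * t)) d hωpos hδ0 hδε' hρ0 hxy
    hθt h2πr hKr0 hKt'.le hlog4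
  have hA0 : 0 < (2 * Real.pi * (θ * t)) ^ (-(d : ℝ) / 2) * ω * (ε' - δ) ^ d *
      Real.exp (-(‖x - y‖ + ε' - δ) ^ 2 / (2 * (θ * t))) :=
    mul_pos (mul_pos (mul_pos (Real.rpow_pos_of_pos (mul_pos (by positivity) hθt) _) hωpos)
      (pow_pos hδ' d)) (Real.exp_pos _)
  have hIB2 : ENNReal.ofReal
      (((2 * Real.pi * (θ * t)) ^ (-(d : ℝ) / 2) * ω * (ε' - δ) ^ d *
        Real.exp (-(‖x - y‖ + ε' - δ) ^ 2 / (2 * (θ * t)))) / 2)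
      ≤ ∫⁻ z in Metric.ball y ε', ENNReal.ofReal (q (θ * t) x z) :=
    le_trans (ENNReal.ofReal_le_ofReal (by linarith only [hBA])) hIB
  -- Chapman-Kolmogorov
  have hck := hCK (t - θ * t) t
    (by rw [show t - θ * t = η * t from by rw [hθdef]; ring]; exact hηt)
    (by linarith only [hθt]) x y
  rw [sub_sub_cancel, show t - θ * t = η * t by rw [hθdef]; ring] at hck
  -- main chain
  have key : ENNReal.ofReal ((C₁ * Real.exp (-C₂ * (η * t)) * (η * t) ^ (-(d : ℝ) / 2) *
        Real.exp (-C₃ * ε' ^ 2 / (η * t))) *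
      (((2 * Real.pi * (θ * t)) ^ (-(d : ℝ) / 2) * ω * (ε' - δ) ^ d *
        Real.exp (-(‖x - y‖ + ε' - δ) ^ 2 / (2 * (θ * t)))) / 2))
      ≤ ENNReal.ofReal (q t x y) := by
    rw [ENNReal.ofReal_mul hm0.le]
    calc ENNReal.ofReal (C₁ * Real.exp (-C₂ * (η * t)) * (η * t) ^ (-(d : ℝ) / 2) *
          Real.exp (-C₃ * ε' ^ 2 / (η * t))) *
        ENNReal.ofReal (((2 * Real.pi * (θ * t)) ^ (-(d : ℝ) / 2) * ω * (ε' - δ) ^ d *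
          Real.exp (-(‖x - y‖ + ε' - δ) ^ 2 / (2 * (θ * t)))) / 2)
        ≤ ENNReal.ofReal (C₁ * Real.exp (-C₂ * (η * t)) * (η * t) ^ (-(d : ℝ) / 2) *
            Real.exp (-C₃ * ε' ^ 2 / (η * t))) *
          ∫⁻ z in Metric.ball y ε', ENNReal.ofReal (q (θ * t) x z) :=
        mul_le_mul_right hIB2 _
      _ = ∫⁻ z in Metric.ball y ε',
          ENNReal.ofReal (C₁ * Real.exp (-C₂ * (η * t)) * (η * t) ^ (-(d : ℝ) / 2) *
            Real.exp (-C₃ * ε' ^ 2 / (η * t))) * ENNReal.ofReal (q (θ * t) x z) :=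
        (lintegral_const_mul' _ _ ENNReal.ofReal_ne_top).symm
      _ ≤ ∫⁻ z in Metric.ball y ε', ENNReal.ofReal (q (θ * t) x z * q (η * t) z y) := by
          apply setLIntegral_mono' measurableSet_ball
          intro z hz
          rw [← ENNReal.ofReal_mul hm0.le]
          apply ENNReal.ofReal_le_ofReal
          rw [mul_comm]
          exact mul_le_mul_of_nonneg_left (hql z hz) (hq0 _ _ _)
      _ ≤ ∫⁻ z, ENNReal.ofReal (q (θ * t) x z * q (η * t) z y) :=
        setLIntegral_le_lintegral _ _
      _ = ENNReal.ofReal (q t x y) := hck.symm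
  have hq_lb : (C₁ * Real.exp (-C₂ * (η * t)) * (η * t) ^ (-(d : ℝ) / 2) *
        Real.exp (-C₃ * ε' ^ 2 / (η * t))) *
      (((2 * Real.pi * (θ * t)) ^ (-(d : ℝ) / 2) * ω * (ε' - δ) ^ d *
        Real.exp (-(‖x - y‖ + ε' - δ) ^ 2 / (2 * (θ * t)))) / 2) ≤ q t x y :=
    (ENNReal.ofReal_le_ofReal_iff (hq0 t x y)).mp key
  have hlogle : Real.log ((C₁ * Real.exp (-C₂ * (η * t)) * (η * t) ^ (-(d : ℝ) / 2) *
        Real.exp (-C₃ * ε' ^ 2 / (η * t))) *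
      (((2 * Real.pi * (θ * t)) ^ (-(d : ℝ) / 2) * ω * (ε' - δ) ^ d *
        Real.exp (-(‖x - y‖ + ε' - δ) ^ 2 / (2 * (θ * t)))) / 2))
      ≤ Real.log (q t x y) :=
    Real.log_le_log (mul_pos hm0 (div_pos hA0 two_pos)) hq_lb
  have hmono := mul_le_mul_of_nonneg_left hlogle ht0.le
  have hexp := aux_expand C₁ C₂ C₃ ω δ ε' η θ ‖x - y‖ t d h1 hωpos hδε' hη0 hθ0 ht0
  -- uniform bound on the distance correction
  have hsup : (‖x - y‖ + ε' - δ) ^ 2 / (2 * θ) - ‖x - y‖ ^ 2 / 2 ≤ ε / 2 := by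
    have key2 : (‖x - y‖ + ε' - δ) ^ 2 ≤ θ * ‖x - y‖ ^ 2 + θ * ε := by
      have k1 : (‖x - y‖ + ε' - δ) ^ 2 ≤ (‖x - y‖ + ε') ^ 2 :=
        pow_le_pow_left₀ (by linarith only [hρ0, hδε']) (by linarith only [hδ0]) 2
      have k2 : (‖x - y‖ + ε') ^ 2 = ‖x - y‖ ^ 2 + 2 * ‖x - y‖ * ε' + ε' ^ 2 := by ring
      have k3 : 2 * ‖x - y‖ * ε' ≤ 2 * M * ε' :=
        mul_le_mul_of_nonneg_right (by linarith only [hxy]) hε'0.le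
      have k4 : ‖x - y‖ ^ 2 ≤ M ^ 2 := pow_le_pow_left₀ hρ0 hxy 2
      have k5 : η * ‖x - y‖ ^ 2 ≤ η * M ^ 2 := mul_le_mul_of_nonneg_left k4 hη0.le
      have k6 : θ * ‖x - y‖ ^ 2 = ‖x - y‖ ^ 2 - η * ‖x - y‖ ^ 2 := by rw [hθdef]; ring
      have k8 : ε / 2 ≤ θ * ε := by
        have := mul_le_mul_of_nonneg_right hθhalf hε.le
        linarith only [this]
      linarith only [k1, k2, k3, k5, k6, k8, hηM, hterm2]
    have hdiv : (‖x - y‖ + ε' - δ) ^ 2 / (2 * θ) ≤ (θ * ‖x - y‖ ^ 2 + θ * ε) / (2 * θ) :=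
      (div_le_div_iff_of_pos_right (by linarith only [hθ0])).mpr key2
    have heq : (θ * ‖x - y‖ ^ 2 + θ * ε) / (2 * θ) = ‖x - y‖ ^ 2 / 2 + ε / 2 := by
      field_simp
    linarith only [hdiv, heq]
  rw [hexp] at hmono
  linarith only [hΦt, hterm3, hsup, hmono]
end
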